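/- (1) For every Young diagram Y contained in Y_{n,n}, the diagonal expression d(Y) = (d_{−n}(Y),…,d_n(Y)) ∈ D_{n,n} is symmetric (i.e. d_i(Y) = d_{−i}(Y) for all −n ≤ i ≤ n) if and only if Y ∈ T(Y_{n,n}). (2) For every Young diagram Y contained in Y_{n,n+1}, the diagonal expression d(Y) ∈ D_{n,n+1} is symmetric (i.e. d_i(Y) = d_{1−i}(Y) for all −n ≤ i ≤ n+1) if and only if Y ∈ T(Y_{n,n+1}). -/

import Mathlib

open Finset

/-- The rectangular Young diagram `Y_{m,n}` (boxes are 1-based pairs `(i,j)`). -/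
def rect (m n : ℕ) : Finset (ℕ × ℕ) := Finset.Icc 1 m ×ˢ Finset.Icc 1 n

/-- `Y` is a Young diagram: a finite set of 1-based boxes, downward closed. -/
def IsYD (Y : Finset (ℕ × ℕ)) : Prop :=
  (∀ p ∈ Y, 1 ≤ p.1 ∧ 1 ≤ p.2) ∧
  (∀ p ∈ Y, ∀ q : ℕ × ℕ, 1 ≤ q.1 → 1 ≤ q.2 → q.1 ≤ p.1 → q.2 ≤ p.2 → q ∈ Y)

/-- `d_k(Y)`: the number of boxes of `Y` on the `k`-th diagonal `j - i = k`. -/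
def dk (Y : Finset (ℕ × ℕ)) (k : ℤ) : ℤ :=
  ((Y.filter fun p => (p.2 : ℤ) - (p.1 : ℤ) = k).card : ℤ)

/-- The set `D_{m,n}` of diagonal sequences: non-negative, vanishing outside
`(-m, n)`, and satisfying the adjacency condition. -/
def Dseq (m n : ℕ) (a : ℤ → ℤ) : Prop :=
  (∀ k : ℤ, 0 ≤ a k) ∧
  (∀ k : ℤ, k ≤ -(m : ℤ) → a k = 0) ∧
  (∀ k : ℤ, (n : ℤ) ≤ k → a k = 0) ∧
  (∀ i : ℤ, -(m : ℤ) < i → i ≤ 0 → a (i - 1) ≤ a i ∧ a i ≤ a (i - 1) + 1) ∧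
  (∀ i : ℤ, 0 < i → i ≤ (n : ℤ) → a i ≤ a (i - 1) ∧ a (i - 1) ≤ a i + 1)

/-- `a_{[l,r]}`: subtract `1` from the components indexed by `l ≤ k ≤ r`. -/
def cut (a : ℤ → ℤ) (l r : ℤ) : ℤ → ℤ := fun k => if l ≤ k ∧ k ≤ r then a k - 1 else a k

/-- The pair `(x,y)` sitting at positions `(k-1,k)` satisfies the adjacency condition. -/
def adjPair (k x y : ℤ) : Prop := if k ≤ 0 then x ≤ y ∧ y ≤ x + 1 else y ≤ x ∧ x ≤ y + 1

/-- `(a_{k-1}, a_k)` is a left bulge, `a_{k-1} ↘ a_k`. -/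
def leftBulge (a : ℤ → ℤ) (k : ℤ) : Prop :=
  adjPair k (a (k - 1)) (a k) ∧ adjPair k (a (k - 1) - 1) (a k)

/-- `(a_{k-1}, a_k)` is a right bulge, `a_{k-1} ↗ a_k`. -/
def rightBulge (a : ℤ → ℤ) (k : ℤ) : Prop :=
  adjPair k (a (k - 1)) (a k) ∧ adjPair k (a (k - 1)) (a k - 1)

/-- The map `E` duplicating the `c`-th component of a sequence. -/
def Emap (c : ℤ) (a : ℤ → ℤ) : ℤ → ℤ := fun k => if k ≤ c then a k else a (k - 1)

def el (c k : ℤ) : ℤ := if k ≤ c then k else k + 1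

def er (c k : ℤ) : ℤ := if k < c then k else k + 1

/-- The unimodal numbering `α_{m,n}(i,j) = min (j-i+m) (i-j+n)`. -/
def unimodal (m n : ℕ) (p : ℕ × ℕ) : ℤ :=
  min ((p.2 : ℤ) - (p.1 : ℤ) + m) ((p.1 : ℤ) - (p.2 : ℤ) + n)

/-- `A(X)`: the multiset of unimodal numbers of the boxes of `X`. -/
def Amul (m n : ℕ) (X : Finset (ℕ × ℕ)) : Multiset ℤ := X.val.map (unimodal m n)

/-- The hook of the box `(i,j)` in `Y`. -/
def hook (Y : Finset (ℕ × ℕ)) (i j : ℕ) : Finset (ℕ × ℕ) :=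
  Y.filter fun p => (p.1 = i ∧ j ≤ p.2) ∨ (p.2 = j ∧ i ≤ p.1)

/-- After removing the hook of `(i,j)`, boxes strictly south-east of `(i,j)` move
up-left by one step. -/
def shiftBox (i j : ℕ) (p : ℕ × ℕ) : ℕ × ℕ :=
  if i < p.1 ∧ j < p.2 then (p.1 - 1, p.2 - 1) else p

/-- The Young diagram `Y ∖ h_Y(i,j)` obtained by removing the hook of `(i,j)`. -/
def removeHook (Y : Finset (ℕ × ℕ)) (i j : ℕ) : Finset (ℕ × ℕ) :=
  (Y \ hook Y i j).image (shiftBox i j)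

/-- One move of MHRG(m,n): remove a hook; if the resulting diagram has a hook with
the same multiset of unimodal numbers, one such hook must also be removed
(this second removal happens at most once). -/
def Move (m n : ℕ) (Y Y' : Finset (ℕ × ℕ)) : Prop :=
  ∃ i j : ℕ, (i, j) ∈ Y ∧
    ((Y' = removeHook Y i j ∧
        ¬∃ i' j' : ℕ, (i', j') ∈ removeHook Y i j ∧
          Amul m n (hook (removeHook Y i j) i' j') = Amul m n (hook Y i j)) ∨
      (∃ i' j' : ℕ, (i', j') ∈ removeHook Y i j ∧
        Amul m n (hook (removeHook Y i j) i' j') = Amul m n (hook Y i j) ∧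
        Y' = removeHook (removeHook Y i j) i' j'))

/-- `T(Y_{m,n})`: the positions of MHRG(m,n) reachable from the starting position. -/
def Reach (m n : ℕ) (Y : Finset (ℕ × ℕ)) : Prop :=
  Relation.ReflTransGen (Move m n) (rect m n) Y

/-- `O(Y)`: the set of options of a position `Y` in MHRG(m,n). -/
def Opt (m n : ℕ) (Y : Finset (ℕ × ℕ)) : Set (Finset (ℕ × ℕ)) := {Y' | Move m n Y Y'}

lemma card_removeHook_lt (Y : Finset (ℕ × ℕ)) (i j : ℕ) (h : (i, j) ∈ Y) :
    (removeHook Y i j).card < Y.card := by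
  have hsub : hook Y i j ⊆ Y := Finset.filter_subset _ _
  have hmem : (i, j) ∈ hook Y i j :=
    Finset.mem_filter.mpr ⟨h, Or.inl ⟨rfl, le_rfl⟩⟩
  have h1 : (removeHook Y i j).card ≤ (Y \ hook Y i j).card := Finset.card_image_le
  have h2 : (Y \ hook Y i j).card = Y.card - (hook Y i j).card := Finset.card_sdiff_of_subset hsub
  have h3 : 0 < (hook Y i j).card := Finset.card_pos.mpr ⟨_, hmem⟩
  have h4 : (hook Y i j).card ≤ Y.card := Finset.card_le_card hsub
  omega

lemma move_card_lt {m n : ℕ} {Y Y' : Finset (ℕ × ℕ)} (h : Move m n Y Y') :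
    Y'.card < Y.card := by
  obtain ⟨i, j, hij, hc⟩ := h
  rcases hc with ⟨rfl, -⟩ | ⟨i', j', hij', -, rfl⟩
  · exact card_removeHook_lt Y i j hij
  · exact (card_removeHook_lt _ i' j' hij').trans (card_removeHook_lt Y i j hij)

/-- The minimal excludant. -/
noncomputable def mex (s : Set ℕ) : ℕ := sInf {k | k ∉ s}

/-- The Grundy value of a position of MHRG(m,n). -/
noncomputable def grundy (m n : ℕ) (Y : Finset (ℕ × ℕ)) : ℕ :=
  mex {g : ℕ | ∃ Y', ∃ _ : Move m n Y Y', grundy m n Y' = g}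
termination_by Y.card
decreasing_by exact move_card_lt (by assumption)

/-- The two-row Young diagram `(λ₁, λ₂)`. -/
def tworow (a b : ℕ) : Finset (ℕ × ℕ) :=
  ({1} : Finset ℕ) ×ˢ Finset.Icc 1 a ∪ ({2} : Finset ℕ) ×ˢ Finset.Icc 1 b

/-- `S` is a shifted Young diagram: rows are intervals `[i, λ_i]` with `λ` strictly
decreasing. -/
def IsShifted (S : Finset (ℕ × ℕ)) : Prop :=
  (∀ p ∈ S, 1 ≤ p.1 ∧ p.1 ≤ p.2) ∧
  (∀ p ∈ S, ∀ j' : ℕ, p.1 ≤ j' → j' ≤ p.2 → (p.1, j') ∈ S) ∧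
  (∀ p ∈ S, 2 ≤ p.1 → (p.1 - 1, p.2 + 1) ∈ S)

/-- The shifted Young diagram of a (strictly decreasing, positive) list of row lengths. -/
def shiftedOf (l : List ℕ) : Finset (ℕ × ℕ) :=
  (Finset.range l.length).biUnion fun i =>
    ({i + 1} : Finset ℕ) ×ˢ Finset.Icc (i + 1) (l.getD i 0)

/-- The staircase `S_n = (n, n-1, …, 1)`. -/
def staircase (n : ℕ) : List ℕ := (List.range n).map fun i => n - i

/-- The shifted hook of the box `(i,j)` in `S` (box, arm, leg and tail). -/
def shook (S : Finset (ℕ × ℕ)) (i j : ℕ) : Finset (ℕ × ℕ) :=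
  S.filter fun p => (p.1 = i ∧ j ≤ p.2) ∨ (p.2 = j ∧ i ≤ p.1) ∨ (p.1 = j + 1 ∧ j < p.2)

/-- The shifting of boxes performed after removing the shifted hook of `(i,j)`. -/
def sShiftBox (i j : ℕ) (p : ℕ × ℕ) : ℕ × ℕ :=
  if i < p.1 ∧ p.1 < j + 1 ∧ j < p.2 then (p.1 - 1, p.2 - 1)
  else if j + 1 < p.1 then (p.1 - 2, p.2 - 2)
  else p

/-- The shifted Young diagram obtained by removing the shifted hook of `(i,j)`. -/
def sRemoveHook (S : Finset (ℕ × ℕ)) (i j : ℕ) : Finset (ℕ × ℕ) :=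
  (S \ shook S i j).image (sShiftBox i j)

/-- One move of HRG on shifted Young diagrams: remove one hook. -/
def SMove (S S' : Finset (ℕ × ℕ)) : Prop :=
  ∃ i j : ℕ, (i, j) ∈ S ∧ S' = sRemoveHook S i j

lemma card_sRemoveHook_lt (S : Finset (ℕ × ℕ)) (i j : ℕ) (h : (i, j) ∈ S) :
    (sRemoveHook S i j).card < S.card := by
  have hsub : shook S i j ⊆ S := Finset.filter_subset _ _
  have hmem : (i, j) ∈ shook S i j :=
    Finset.mem_filter.mpr ⟨h, Or.inl ⟨rfl, le_rfl⟩⟩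
  have h1 : (sRemoveHook S i j).card ≤ (S \ shook S i j).card := Finset.card_image_le
  have h2 : (S \ shook S i j).card = S.card - (shook S i j).card := Finset.card_sdiff_of_subset hsub
  have h3 : 0 < (shook S i j).card := Finset.card_pos.mpr ⟨_, hmem⟩
  have h4 : (shook S i j).card ≤ S.card := Finset.card_le_card hsub
  omega

lemma smove_card_lt {S S' : Finset (ℕ × ℕ)} (h : SMove S S') : S'.card < S.card := by
  obtain ⟨i, j, hij, rfl⟩ := h
  exact card_sRemoveHook_lt S i j hij

/-- The Grundy value of a position of HRG on shifted Young diagrams. -/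
noncomputable def sgrundy (S : Finset (ℕ × ℕ)) : ℕ :=
  mex {g : ℕ | ∃ S', ∃ _ : SMove S S', sgrundy S' = g}
termination_by S.card
decreasing_by exact smove_card_lt (by assumption)

/-- `OH(Y)` for a two-row diagram `Y = (λ₁,λ₂)`: the results of single hook removals. -/
def OH (l1 l2 : ℕ) : Set (Finset (ℕ × ℕ)) :=
  {Y | ∃ a : ℕ, l2 ≤ a ∧ a < l1 ∧ Y = tworow a l2} ∪
  {Y | ∃ b : ℕ, b < l2 ∧ Y = tworow l1 b} ∪
  {Y | ∃ a : ℕ, a < l2 ∧ Y = tworow (l2 - 1) a}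


section Dev

/-- prefix lemma -/
lemma natPrefix (S : Finset ℕ) (h : ∀ t ∈ S, 1 ≤ t ∧ (2 ≤ t → t - 1 ∈ S)) :
    S = Finset.Icc 1 S.card := by
  have desc : ∀ d u, u ∈ S → ∀ t, 1 ≤ t → t ≤ u → u - t ≤ d → t ∈ S := by
    intro d
    induction d with
    | zero =>
      intro u hu t h1 h2 h3
      have ht : t = u := by omega
      rw [ht]; exact hu
    | succ d ih =>
      intro u hu t h1 h2 h3
      rcases Nat.eq_or_lt_of_le h2 with heq | hlt
      · rw [heq]; exact hu
      · have hu1 := (h u hu).2 (by omega)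
        exact ih (u-1) hu1 t h1 (by omega) (by omega)
  have desc' : ∀ u ∈ S, ∀ t, 1 ≤ t → t ≤ u → t ∈ S := fun u hu t h1 h2 =>
    desc (u - t) u hu t h1 h2 le_rfl
  have hcard : ∀ t ∈ S, t ≤ S.card := by
    intro t ht
    have : Finset.Icc 1 t ⊆ S := by
      intro x hx
      simp only [Finset.mem_Icc] at hx
      exact desc' t ht x hx.1 hx.2
    calc t = (Finset.Icc 1 t).card := by simp
    _ ≤ S.card := Finset.card_le_card this
  ext t
  simp only [Finset.mem_Icc]
  constructor
  · intro ht; exact ⟨(h t ht).1, hcard t ht⟩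
  · rintro ⟨h1, h2⟩
    by_contra hns
    have hsub : S ⊆ Finset.Icc 1 (t-1) := by
      intro u hu
      simp only [Finset.mem_Icc]
      refine ⟨(h u hu).1, ?_⟩
      by_contra hu2
      exact hns (desc' u hu t h1 (by omega))
    have := Finset.card_le_card hsub
    simp at this
    omega

/-- the `t`-th box on diagonal `k`. -/
def diagBox (k : ℤ) (t : ℕ) : ℕ × ℕ := (t + (-k).toNat, t + k.toNat)

lemma diagBox_diag (k : ℤ) (t : ℕ) :
    ((diagBox k t).2 : ℤ) - (diagBox k t).1 = k := by
  simp only [diagBox]; omega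

lemma diagBox_min (k : ℤ) (t : ℕ) : min (diagBox k t).1 (diagBox k t).2 = t := by
  simp only [diagBox]; omega

lemma eq_diagBox {p : ℕ × ℕ} : p = diagBox ((p.2 : ℤ) - p.1) (min p.1 p.2) := by
  rcases p with ⟨i, j⟩
  simp only [diagBox, Prod.mk.injEq]
  constructor <;> omega

lemma dk_nonneg (Y : Finset (ℕ × ℕ)) (k : ℤ) : 0 ≤ dk Y k := Int.natCast_nonneg _

lemma dk_mono {Y Z : Finset (ℕ × ℕ)} (h : Y ⊆ Z) (k : ℤ) : dk Y k ≤ dk Z k := by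
  unfold dk
  exact_mod_cast Finset.card_le_card (Finset.filter_subset_filter _ h)

/-- membership on a diagonal -/
lemma mem_diag {Y : Finset (ℕ × ℕ)} (hY : IsYD Y) (k : ℤ) (t : ℕ) :
    diagBox k t ∈ Y ↔ 1 ≤ t ∧ (t : ℤ) ≤ dk Y k := by
  classical
  set F := Y.filter (fun p => (p.2 : ℤ) - p.1 = k) with hF
  set S := F.image (fun p => min p.1 p.2) with hS
  have hmemF : ∀ p ∈ F, p = diagBox k (min p.1 p.2) := by
    intro p hp
    simp only [hF, Finset.mem_filter] at hp
    have := @eq_diagBox p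
    rwa [hp.2] at this
  have hSF : ∀ t, t ∈ S ↔ diagBox k t ∈ F := by
    intro t
    constructor
    · intro ht
      simp only [hS, Finset.mem_image] at ht
      obtain ⟨p, hp, hpt⟩ := ht
      have := hmemF p hp
      rw [hpt] at this
      rwa [← this]
    · intro ht
      simp only [hS, Finset.mem_image]
      exact ⟨diagBox k t, ht, diagBox_min k t⟩
  have hcard : S.card = F.card := by
    apply Finset.card_image_of_injOn
    intro p hp q hq hpq
    simp only at hpq
    rw [hmemF p hp, hmemF q hq, hpq]
  have hpre : S = Finset.Icc 1 S.card := by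
    apply natPrefix
    intro t ht
    rw [hSF] at ht
    simp only [hF, Finset.mem_filter] at ht
    have h1 := hY.1 _ ht.1
    simp only [diagBox] at h1
    constructor
    · omega
    · intro h2
      rw [hSF]
      simp only [hF, Finset.mem_filter]
      have hmem : diagBox k (t-1) ∈ Y := by
        apply hY.2 _ ht.1 <;> simp only [diagBox] <;> omega
      exact ⟨hmem, diagBox_diag k (t-1)⟩
  have hFdk : (F.card : ℤ) = dk Y k := by rw [dk]
  have : diagBox k t ∈ Y ↔ diagBox k t ∈ F := by
    simp only [hF, Finset.mem_filter]
    constructor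
    · intro h; exact ⟨h, diagBox_diag k t⟩
    · intro h; exact h.1
  rw [this, ← hSF, hpre, Finset.mem_Icc, hcard]
  omega

/-- a YD is determined by its diagonal counts -/
lemma YD_ext {Y Z : Finset (ℕ × ℕ)} (hY : IsYD Y) (hZ : IsYD Z)
    (h : ∀ k, dk Y k = dk Z k) : Y = Z := by
  ext p
  constructor
  · intro hp
    have := @eq_diagBox p
    rw [this] at hp ⊢
    rw [mem_diag hZ]
    rw [mem_diag hY] at hp
    rw [← h]; exact hp
  · intro hp
    have := @eq_diagBox p
    rw [this] at hp ⊢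
    rw [mem_diag hY]
    rw [mem_diag hZ] at hp
    rw [h]; exact hp

/-- adjacency of diagonal counts -/
lemma dk_adj {Y : Finset (ℕ × ℕ)} (hY : IsYD Y) (k : ℤ) :
    (k ≤ 0 → dk Y (k-1) ≤ dk Y k ∧ dk Y k ≤ dk Y (k-1) + 1) ∧
    (0 ≤ k → dk Y (k+1) ≤ dk Y k ∧ dk Y k ≤ dk Y (k+1) + 1) := by
  have h1 : ∀ j : ℤ, j ≤ 0 → dk Y (j-1) ≤ dk Y j := by
    intro j hj
    rcases le_or_gt (dk Y (j-1)) 0 with h | h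
    · exact h.trans (dk_nonneg Y j)
    · set t := (dk Y (j-1)).toNat with htdef
      have ht : diagBox (j-1) t ∈ Y := by
        rw [mem_diag hY]; omega
      have ht2 : diagBox j t ∈ Y := by
        apply hY.2 _ ht <;> simp [diagBox] <;> omega
      rw [mem_diag hY] at ht2
      omega
  have h2 : ∀ j : ℤ, j ≤ 0 → dk Y j ≤ dk Y (j-1) + 1 := by
    intro j hj
    rcases le_or_gt (dk Y j) 1 with h | h
    · have := dk_nonneg Y (j-1); omega
    · set t := (dk Y j).toNat with htdef
      have ht : diagBox j t ∈ Y := by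
        rw [mem_diag hY]; omega
      have ht2 : diagBox (j-1) (t-1) ∈ Y := by
        apply hY.2 _ ht <;> simp [diagBox] <;> omega
      rw [mem_diag hY] at ht2
      omega
  have h3 : ∀ j : ℤ, 0 ≤ j → dk Y (j+1) ≤ dk Y j := by
    intro j hj
    rcases le_or_gt (dk Y (j+1)) 0 with h | h
    · exact h.trans (dk_nonneg Y j)
    · set t := (dk Y (j+1)).toNat with htdef
      have ht : diagBox (j+1) t ∈ Y := by
        rw [mem_diag hY]; omega
      have ht2 : diagBox j t ∈ Y := by
        apply hY.2 _ ht <;> simp [diagBox] <;> omega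
      rw [mem_diag hY] at ht2
      omega
  have h4 : ∀ j : ℤ, 0 ≤ j → dk Y j ≤ dk Y (j+1) + 1 := by
    intro j hj
    rcases le_or_gt (dk Y j) 1 with h | h
    · have := dk_nonneg Y (j+1); omega
    · set t := (dk Y j).toNat with htdef
      have ht : diagBox j t ∈ Y := by
        rw [mem_diag hY]; omega
      have ht2 : diagBox (j+1) (t-1) ∈ Y := by
        apply hY.2 _ ht <;> simp [diagBox] <;> omega
      rw [mem_diag hY] at ht2
      omega
  exact ⟨fun hk => ⟨h1 k hk, h2 k hk⟩, fun hk => ⟨h3 k hk, h4 k hk⟩⟩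

end Dev
section Dev2

lemma mem_rect {m n : ℕ} {p : ℕ × ℕ} :
    p ∈ rect m n ↔ 1 ≤ p.1 ∧ p.1 ≤ m ∧ 1 ≤ p.2 ∧ p.2 ≤ n := by
  simp only [rect, Finset.mem_product, Finset.mem_Icc]
  tauto

lemma rect_IsYD (m n : ℕ) : IsYD (rect m n) := by
  constructor
  · intro p hp; rw [mem_rect] at hp; exact ⟨hp.1, hp.2.2.1⟩
  · intro p hp q h1 h2 h3 h4
    rw [mem_rect] at hp ⊢
    omega

lemma dk_from_mem {Y : Finset (ℕ × ℕ)} (hY : IsYD Y) (k M : ℤ)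
    (h : ∀ t : ℕ, 1 ≤ t → (diagBox k t ∈ Y ↔ (t : ℤ) ≤ M)) :
    dk Y k = max 0 M := by
  rcases le_or_gt M 0 with hM | hM
  · rcases le_or_gt (dk Y k) 0 with h0 | h0
    · have := dk_nonneg Y k; omega
    · have ht : diagBox k (dk Y k).toNat ∈ Y := by rw [mem_diag hY]; omega
      rw [h _ (by omega)] at ht
      omega
  · have h1 : (M.toNat : ℤ) ≤ dk Y k := by
      have := (mem_diag hY k M.toNat).mp ((h M.toNat (by omega)).mpr (by omega))
      omega
    rcases le_or_gt (dk Y k) 0 with h0 | h0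
    · omega
    · have ht : diagBox k (dk Y k).toNat ∈ Y := by rw [mem_diag hY]; omega
      rw [h _ (by omega)] at ht
      omega

lemma dk_rect (m n : ℕ) (k : ℤ) :
    dk (rect m n) k = max 0 (min (min (m:ℤ) n) (min (k + m) (n - k))) := by
  apply dk_from_mem (rect_IsYD m n)
  intro t ht
  rw [mem_rect]
  simp only [diagBox]
  omega

lemma dk_zero_right {Y : Finset (ℕ × ℕ)} {m n : ℕ} (h : Y ⊆ rect m n) {k : ℤ}
    (hk : k ≤ -(m:ℤ) ∨ (n:ℤ) ≤ k) : dk Y k = 0 := by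
  have := dk_mono h k
  rw [dk_rect] at this
  have := dk_nonneg Y k
  omega

/-- row lengths -/
def rowLen (Y : Finset (ℕ × ℕ)) (i : ℕ) : ℕ := (Y.filter (fun p => p.1 = i)).card

def colLen (Y : Finset (ℕ × ℕ)) (j : ℕ) : ℕ := (Y.filter (fun p => p.2 = j)).card

lemma mem_row {Y : Finset (ℕ × ℕ)} (hY : IsYD Y) (i j : ℕ) (hi : 1 ≤ i) (hj : 1 ≤ j) :
    (i, j) ∈ Y ↔ j ≤ rowLen Y i := by
  classical
  set F := Y.filter (fun p => p.1 = i) with hF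
  set S := F.image (fun p => p.2) with hS
  have hSF : ∀ t, t ∈ S ↔ (i, t) ∈ F := by
    intro t
    simp only [hS, Finset.mem_image]
    constructor
    · rintro ⟨p, hp, hp3⟩
      have hp1 : p.1 = i := by
        have hpF := hp
        rw [hF] at hpF
        exact (Finset.mem_filter.mp hpF).2
      have hpe : p = (i, t) := by
        rcases p with ⟨x, y⟩
        simp only at hp1 hp3 ⊢
        rw [hp1, hp3]
      rwa [hpe] at hp
    · intro h; exact ⟨(i, t), h, rfl⟩
  have hcard : S.card = F.card := by
    apply Finset.card_image_of_injOn
    intro p hp q hq hpq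
    simp only [hF, Finset.coe_filter, Set.mem_setOf_eq] at hp hq
    simp only at hpq
    rcases p with ⟨p1, p2⟩; rcases q with ⟨q1, q2⟩
    simp only at hp hq hpq ⊢
    rw [hp.2, hq.2, hpq]
  have hpre : S = Finset.Icc 1 S.card := by
    apply natPrefix
    intro t ht
    rw [hSF] at ht
    simp only [hF, Finset.mem_filter] at ht
    have h1 := hY.1 _ ht.1
    simp only at h1
    refine ⟨by omega, fun h2 => ?_⟩
    rw [hSF, hF]
    exact Finset.mem_filter.mpr
      ⟨hY.2 _ ht.1 (i, t-1) (by dsimp only; omega) (by dsimp only; omega) (by dsimp only; omega) (by dsimp only; omega), rfl⟩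
  have : (i, j) ∈ Y ↔ j ∈ S := by
    rw [hSF, hF]
    rw [Finset.mem_filter]
    tauto
  rw [this, hpre, Finset.mem_Icc, hcard]
  unfold rowLen
  rw [← hF]
  omega

lemma mem_col {Y : Finset (ℕ × ℕ)} (hY : IsYD Y) (i j : ℕ) (hi : 1 ≤ i) (hj : 1 ≤ j) :
    (i, j) ∈ Y ↔ i ≤ colLen Y j := by
  classical
  set F := Y.filter (fun p => p.2 = j) with hF
  set S := F.image (fun p => p.1) with hS
  have hSF : ∀ t, t ∈ S ↔ (t, j) ∈ F := by
    intro t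
    simp only [hS, Finset.mem_image]
    constructor
    · rintro ⟨p, hp, hp3⟩
      have hp1 : p.2 = j := by
        have hpF := hp
        rw [hF] at hpF
        exact (Finset.mem_filter.mp hpF).2
      have hpe : p = (t, j) := by
        rcases p with ⟨x, y⟩
        simp only at hp1 hp3 ⊢
        rw [hp1, hp3]
      rwa [hpe] at hp
    · intro h; exact ⟨(t, j), h, rfl⟩
  have hcard : S.card = F.card := by
    apply Finset.card_image_of_injOn
    intro p hp q hq hpq
    simp only [hF, Finset.coe_filter, Set.mem_setOf_eq] at hp hq
    simp only at hpq
    rcases p with ⟨p1, p2⟩; rcases q with ⟨q1, q2⟩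
    simp only at hp hq hpq ⊢
    rw [hp.2, hq.2, hpq]
  have hpre : S = Finset.Icc 1 S.card := by
    apply natPrefix
    intro t ht
    rw [hSF] at ht
    simp only [hF, Finset.mem_filter] at ht
    have h1 := hY.1 _ ht.1
    simp only at h1
    refine ⟨by omega, fun h2 => ?_⟩
    rw [hSF, hF]
    exact Finset.mem_filter.mpr
      ⟨hY.2 _ ht.1 (t-1, j) (by dsimp only; omega) (by dsimp only; omega) (by dsimp only; omega) (by dsimp only; omega), rfl⟩
  have : (i, j) ∈ Y ↔ i ∈ S := by
    rw [hSF, hF]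
    rw [Finset.mem_filter]
    tauto
  rw [this, hpre, Finset.mem_Icc, hcard]
  unfold colLen
  rw [← hF]
  omega

end Dev2
section Dev3

/-- the box of the hook of `(i,j)` on diagonal `k` -/
def hookBox (i j : ℕ) (k : ℤ) : ℕ × ℕ :=
  if (j : ℤ) - i ≤ k then (i, ((i : ℤ) + k).toNat) else (((j : ℤ) - k).toNat, j)

lemma hookBox_diag (i j : ℕ) (hi : 1 ≤ i) (hj : 1 ≤ j) (k : ℤ) :
    ((hookBox i j k).2 : ℤ) - (hookBox i j k).1 = k := by
  unfold hookBox
  split_ifs with h <;> simp only <;> omega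

lemma hook_eq {Y : Finset (ℕ × ℕ)} (hY : IsYD Y) {i j : ℕ} (hij : (i, j) ∈ Y) :
    hook Y i j =
      (Finset.Icc ((j : ℤ) - colLen Y j) ((rowLen Y i : ℤ) - i)).image (hookBox i j) := by
  have hi : 1 ≤ i := (hY.1 _ hij).1
  have hj : 1 ≤ j := (hY.1 _ hij).2
  have hrl : j ≤ rowLen Y i := (mem_row hY i j hi hj).mp hij
  have hcl : i ≤ colLen Y j := (mem_col hY i j hi hj).mp hij
  ext p
  simp only [hook, Finset.mem_filter, Finset.mem_image, Finset.mem_Icc]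
  constructor
  · rintro ⟨hp, hcond⟩
    have hp1 : 1 ≤ p.1 := (hY.1 _ hp).1
    have hp2 : 1 ≤ p.2 := (hY.1 _ hp).2
    rcases hcond with ⟨he, hge⟩ | ⟨he, hge⟩
    · refine ⟨(p.2 : ℤ) - i, ⟨?_, ?_⟩, ?_⟩
      · omega
      · have : (i, p.2) ∈ Y := by rw [← he]; exact hp
        have := (mem_row hY i p.2 hi (by omega)).mp this
        omega
      · unfold hookBox
        rw [if_pos (by omega)]
        rcases p with ⟨x, y⟩
        simp only at he hge ⊢
        rw [Prod.mk.injEq]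
        omega
    · refine ⟨(j : ℤ) - p.1, ⟨?_, ?_⟩, ?_⟩
      · have : (p.1, j) ∈ Y := by rw [← he]; exact hp
        have := (mem_col hY p.1 j (by omega) hj).mp this
        omega
      · omega
      · unfold hookBox
        rcases p with ⟨x, y⟩
        simp only at he hge ⊢
        split_ifs with hc
        · rw [Prod.mk.injEq]; omega
        · rw [Prod.mk.injEq]; omega
  · rintro ⟨k, ⟨hk1, hk2⟩, hpk⟩
    rw [← hpk]
    unfold hookBox
    split_ifs with hc
    · have hmem : (i, ((i:ℤ) + k).toNat) ∈ Y := by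
        rw [mem_row hY i _ hi (by omega)]
        omega
      refine ⟨hmem, Or.inl ⟨rfl, by simp only; omega⟩⟩
    · have hmem : ((((j:ℤ) - k).toNat), j) ∈ Y := by
        rw [mem_col hY _ j (by omega) hj]
        omega
      refine ⟨hmem, Or.inr ⟨rfl, by simp only; omega⟩⟩

lemma hookBox_injOn (i j : ℕ) (hi : 1 ≤ i) (hj : 1 ≤ j) {s : Finset ℤ} :
    Set.InjOn (hookBox i j) s := by
  intro x _ y _ hxy
  have h1 := hookBox_diag i j hi hj x
  have h2 := hookBox_diag i j hi hj y
  rw [hxy] at h1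
  omega

lemma dk_hook {Y : Finset (ℕ × ℕ)} (hY : IsYD Y) {i j : ℕ} (hij : (i, j) ∈ Y) (k : ℤ) :
    dk (hook Y i j) k =
      if (j : ℤ) - colLen Y j ≤ k ∧ k ≤ (rowLen Y i : ℤ) - i then 1 else 0 := by
  classical
  have hi : 1 ≤ i := (hY.1 _ hij).1
  have hj : 1 ≤ j := (hY.1 _ hij).2
  rw [hook_eq hY hij]
  unfold dk
  rw [Finset.filter_image]
  rw [Finset.card_image_of_injOn (hookBox_injOn i j hi hj)]
  have : Finset.filter (fun p => ((hookBox i j p).2 : ℤ) - (hookBox i j p).1 = k)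
      (Finset.Icc ((j : ℤ) - colLen Y j) ((rowLen Y i : ℤ) - i)) =
      Finset.filter (fun p => p = k)
      (Finset.Icc ((j : ℤ) - colLen Y j) ((rowLen Y i : ℤ) - i)) := by
    apply Finset.filter_congr
    intro x _
    rw [hookBox_diag i j hi hj x]
  rw [this]
  split_ifs with hc
  · rw [Finset.filter_eq']
    rw [if_pos (Finset.mem_Icc.mpr ⟨hc.1, hc.2⟩)]
    simp
  · rw [Finset.filter_eq']
    rw [if_neg (fun hmem => hc (Finset.mem_Icc.mp hmem))]
    simp

/-- sequence condition for a row ending at diagonal `r` -/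
def SCr (a : ℤ → ℤ) (r : ℤ) : Prop :=
  (0 ≤ r ∧ a r = a (r+1) + 1) ∨ (r < 0 ∧ 1 ≤ a r ∧ a r = a (r+1))

/-- sequence condition for a column starting at diagonal `l` -/
def SCl (a : ℤ → ℤ) (l : ℤ) : Prop :=
  (l ≤ 0 ∧ a l = a (l-1) + 1) ∨ (0 < l ∧ 1 ≤ a l ∧ a l = a (l-1))

lemma SCr_of_end {Y : Finset (ℕ × ℕ)} (hY : IsYD Y) {i w : ℕ} (hi : 1 ≤ i) (hw : 1 ≤ w)
    (hm : (i, w) ∈ Y) (hnm : (i, w+1) ∉ Y) : SCr (dk Y) ((w : ℤ) - i) := by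
  have e1 : (i, w) = diagBox ((w:ℤ) - i) (min i w) := by
    have := @eq_diagBox (i, w); simpa using this
  have e2 : (i, w+1) = diagBox ((w:ℤ) + 1 - i) (min i (w+1)) := by
    have := @eq_diagBox (i, w+1); simpa using this
  rw [e1, mem_diag hY] at hm
  rw [e2, mem_diag hY] at hnm
  have hadj := (dk_adj hY ((w:ℤ) - i)).2
  have hadj2 := (dk_adj hY ((w:ℤ) + 1 - i)).1
  have hn1 := dk_nonneg Y ((w:ℤ) - i)
  have hn2 := dk_nonneg Y ((w:ℤ) + 1 - i)
  unfold SCr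
  have hco : (w:ℤ) - i + 1 = (w:ℤ) + 1 - i := by ring
  rw [hco] at hadj ⊢
  by_cases hs : 0 ≤ (w:ℤ) - i
  · left
    refine ⟨hs, ?_⟩
    have h1 : min i w = i := by omega
    have h2 : min i (w+1) = i := by omega
    rw [h1] at hm; rw [h2] at hnm
    have := hadj (by omega)
    omega
  · right
    have h1 : min i w = w := by omega
    have h2 : min i (w+1) = w+1 := by omega
    rw [h1] at hm; rw [h2] at hnm
    have heq : (w:ℤ) + 1 - i - 1 = (w:ℤ) - i := by ring
    rw [heq] at hadj2
    have := hadj2 (by omega)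
    omega

lemma SCl_of_end {Y : Finset (ℕ × ℕ)} (hY : IsYD Y) {v j : ℕ} (hv : 1 ≤ v) (hj : 1 ≤ j)
    (hm : (v, j) ∈ Y) (hnm : (v+1, j) ∉ Y) : SCl (dk Y) ((j : ℤ) - v) := by
  have e1 : (v, j) = diagBox ((j:ℤ) - v) (min v j) := by
    have := @eq_diagBox (v, j); simpa using this
  have e2 : (v+1, j) = diagBox ((j:ℤ) - v - 1) (min (v+1) j) := by
    have := @eq_diagBox (v+1, j)
    simp only at this
    convert this using 2
    omega
  rw [e1, mem_diag hY] at hm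
  rw [e2, mem_diag hY] at hnm
  have hadj := (dk_adj hY ((j:ℤ) - v)).1
  have hadj2 := (dk_adj hY ((j:ℤ) - v - 1)).2
  have hn1 := dk_nonneg Y ((j:ℤ) - v)
  have hn2 := dk_nonneg Y ((j:ℤ) - v - 1)
  unfold SCl
  by_cases hs : (j:ℤ) - v ≤ 0
  · left
    refine ⟨hs, ?_⟩
    have h1 : min v j = j := by omega
    have h2 : min (v+1) j = j := by omega
    rw [h1] at hm; rw [h2] at hnm
    have := hadj hs
    omega
  · right
    have h1 : min v j = v := by omega
    have h2 : min (v+1) j = v+1 := by omega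
    rw [h1] at hm; rw [h2] at hnm
    have heq : (j:ℤ) - v - 1 + 1 = (j:ℤ) - v := by ring
    rw [heq] at hadj2
    have := hadj2 (by omega)
    omega

lemma end_of_SCr {Y : Finset (ℕ × ℕ)} (hY : IsYD Y) {r : ℤ} (h : SCr (dk Y) r) :
    ∃ i w : ℕ, 1 ≤ i ∧ 1 ≤ w ∧ (i, w) ∈ Y ∧ (i, w+1) ∉ Y ∧ (w : ℤ) - i = r := by
  unfold SCr at h
  have hn1 := dk_nonneg Y r
  have hn2 := dk_nonneg Y (r+1)
  rcases h with ⟨hr, he⟩ | ⟨hr, h1, he⟩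
  · refine ⟨(dk Y r).toNat, ((dk Y r) + r).toNat, by omega, by omega, ?_, ?_, by omega⟩
    · have : ((dk Y r).toNat, ((dk Y r) + r).toNat) = diagBox r (dk Y r).toNat := by
        unfold diagBox; rw [Prod.mk.injEq]; omega
      rw [this, mem_diag hY]; omega
    · have : ((dk Y r).toNat, ((dk Y r) + r).toNat + 1) = diagBox (r+1) (dk Y r).toNat := by
        unfold diagBox; rw [Prod.mk.injEq]; omega
      rw [this, mem_diag hY]; omega
  · refine ⟨((dk Y r) - r).toNat, (dk Y r).toNat, by omega, by omega, ?_, ?_, by omega⟩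
    · have : (((dk Y r) - r).toNat, (dk Y r).toNat) = diagBox r (dk Y r).toNat := by
        unfold diagBox; rw [Prod.mk.injEq]; omega
      rw [this, mem_diag hY]; omega
    · by_cases hr1 : r + 1 ≤ 0
      · have : (((dk Y r) - r).toNat, (dk Y r).toNat + 1) = diagBox (r+1) ((dk Y r).toNat + 1) := by
          unfold diagBox; rw [Prod.mk.injEq]; omega
        rw [this, mem_diag hY]; omega
      · -- r = -1, r + 1 = 0
        have hr0 : r = -1 := by omega
        have : (((dk Y r) - r).toNat, (dk Y r).toNat + 1) = diagBox (r+1) ((dk Y r).toNat + 1) := by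
          unfold diagBox; rw [Prod.mk.injEq]; omega
        rw [this, mem_diag hY]; omega

lemma end_of_SCl {Y : Finset (ℕ × ℕ)} (hY : IsYD Y) {l : ℤ} (h : SCl (dk Y) l) :
    ∃ v j : ℕ, 1 ≤ v ∧ 1 ≤ j ∧ (v, j) ∈ Y ∧ (v+1, j) ∉ Y ∧ (j : ℤ) - v = l := by
  unfold SCl at h
  have hn1 := dk_nonneg Y l
  have hn2 := dk_nonneg Y (l-1)
  rcases h with ⟨hl, he⟩ | ⟨hl, h1, he⟩
  · refine ⟨((dk Y l) - l).toNat, (dk Y l).toNat, by omega, by omega, ?_, ?_, by omega⟩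
    · have : (((dk Y l) - l).toNat, (dk Y l).toNat) = diagBox l (dk Y l).toNat := by
        unfold diagBox; rw [Prod.mk.injEq]; omega
      rw [this, mem_diag hY]; omega
    · have : (((dk Y l) - l).toNat + 1, (dk Y l).toNat) = diagBox (l-1) (dk Y l).toNat := by
        unfold diagBox; rw [Prod.mk.injEq]; omega
      rw [this, mem_diag hY]; omega
  · refine ⟨(dk Y l).toNat, ((dk Y l) + l).toNat, by omega, by omega, ?_, ?_, by omega⟩
    · have : ((dk Y l).toNat, ((dk Y l) + l).toNat) = diagBox l (dk Y l).toNat := by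
        unfold diagBox; rw [Prod.mk.injEq]; omega
      rw [this, mem_diag hY]; omega
    · by_cases hl1 : 0 ≤ l - 1
      · have : ((dk Y l).toNat + 1, ((dk Y l) + l).toNat) = diagBox (l-1) ((dk Y l).toNat + 1) := by
          unfold diagBox; rw [Prod.mk.injEq]; omega
        rw [this, mem_diag hY]; omega
      · have hl0 : l = 1 := by omega
        have : ((dk Y l).toNat + 1, ((dk Y l) + l).toNat) = diagBox (l-1) ((dk Y l).toNat + 1) := by
          unfold diagBox; rw [Prod.mk.injEq]; omega
        rw [this, mem_diag hY]; omega

/-- given both sequence conditions with `l ≤ r`, a box with hook interval `[l,r]` exists -/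
lemma box_of_SC {Y : Finset (ℕ × ℕ)} (hY : IsYD Y) {l r : ℤ} (hlr : l ≤ r)
    (hr : SCr (dk Y) r) (hl : SCl (dk Y) l) :
    ∃ i j : ℕ, (i, j) ∈ Y ∧ 1 ≤ i ∧ 1 ≤ j ∧
      (rowLen Y i : ℤ) - i = r ∧ (j : ℤ) - colLen Y j = l := by
  obtain ⟨i, w, hi, hw, hm, hnm, hwi⟩ := end_of_SCr hY hr
  obtain ⟨v, j, hv, hj, hm', hnm', hjv⟩ := end_of_SCl hY hl
  have hrow : rowLen Y i = w := by
    have h1 := (mem_row hY i w hi hw).mp hm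
    have h2 : ¬ (w + 1 ≤ rowLen Y i) := fun hc => hnm ((mem_row hY i (w+1) hi (by omega)).mpr hc)
    omega
  have hcol : colLen Y j = v := by
    have h1 := (mem_col hY v j hv hj).mp hm'
    have h2 : ¬ (v + 1 ≤ colLen Y j) := fun hc => hnm' ((mem_col hY (v+1) j (by omega) hj).mpr hc)
    omega
  refine ⟨i, j, ?_, hi, hj, by omega, by omega⟩
  rcases le_or_gt j w with hc | hc
  · exact hY.2 _ hm (i, j) (by dsimp only; omega) (by dsimp only; omega)
      (by dsimp only; omega) (by dsimp only; omega)
  · exfalso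
    have hvi : (i : ℤ) < v := by omega
    have : (i, j) ∈ Y := hY.2 _ hm' (i, j) (by dsimp only; omega) (by dsimp only; omega)
      (by dsimp only; omega) (by dsimp only; omega)
    have := (mem_row hY i j hi hj).mp this
    omega

/-- the hook interval endpoints of a box satisfy the sequence conditions -/
lemma SC_of_box {Y : Finset (ℕ × ℕ)} (hY : IsYD Y) {i j : ℕ} (hij : (i, j) ∈ Y) :
    SCr (dk Y) ((rowLen Y i : ℤ) - i) ∧ SCl (dk Y) ((j : ℤ) - colLen Y j) ∧
      (j : ℤ) - colLen Y j ≤ (j : ℤ) - i ∧ (j : ℤ) - i ≤ (rowLen Y i : ℤ) - i := by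
  have hi : 1 ≤ i := (hY.1 _ hij).1
  have hj : 1 ≤ j := (hY.1 _ hij).2
  have hrl : j ≤ rowLen Y i := (mem_row hY i j hi hj).mp hij
  have hcl : i ≤ colLen Y j := (mem_col hY i j hi hj).mp hij
  refine ⟨?_, ?_, by omega, by omega⟩
  · apply SCr_of_end hY hi (by omega)
    · exact (mem_row hY i (rowLen Y i) hi (by omega)).mpr le_rfl
    · intro hc
      have := (mem_row hY i (rowLen Y i + 1) hi (by omega)).mp hc
      omega
  · apply SCl_of_end hY (by omega) hj
    · exact (mem_col hY (colLen Y j) j (by omega) hj).mpr le_rfl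
    · intro hc
      have := (mem_col hY (colLen Y j + 1) j (by omega) hj).mp hc
      omega

end Dev3
section Dev4

lemma mem_hook {Y : Finset (ℕ × ℕ)} {i j : ℕ} {p : ℕ × ℕ} :
    p ∈ hook Y i j ↔ p ∈ Y ∧ ((p.1 = i ∧ j ≤ p.2) ∨ (p.2 = j ∧ i ≤ p.1)) := by
  simp only [hook, Finset.mem_filter]

lemma mem_removeHook {Y : Finset (ℕ × ℕ)} (hY : IsYD Y) {i j : ℕ} (hij : (i, j) ∈ Y)
    {q : ℕ × ℕ} :
    q ∈ removeHook Y i j ↔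
      (q ∈ Y ∧ q ∉ hook Y i j ∧ (q.1 ≤ i ∨ q.2 ≤ j)) ∨
      ((q.1 + 1, q.2 + 1) ∈ Y ∧ i ≤ q.1 ∧ j ≤ q.2) := by
  have hi : 1 ≤ i := (hY.1 _ hij).1
  have hj : 1 ≤ j := (hY.1 _ hij).2
  unfold removeHook
  simp only [Finset.mem_image, Finset.mem_sdiff]
  constructor
  · rintro ⟨p, ⟨hpY, hpH⟩, hps⟩
    have hp1 : 1 ≤ p.1 := (hY.1 _ hpY).1
    have hp2 : 1 ≤ p.2 := (hY.1 _ hpY).2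
    unfold shiftBox at hps
    split_ifs at hps with hc
    · right
      have hq : q.1 = p.1 - 1 ∧ q.2 = p.2 - 1 := by
        rw [← hps]; exact ⟨rfl, rfl⟩
      have he : p = (q.1 + 1, q.2 + 1) := by
        rcases p with ⟨x, y⟩; rcases q with ⟨u, v⟩
        simp only at hq hc ⊢
        rw [Prod.mk.injEq]
        omega
      rw [he] at hpY hc
      exact ⟨hpY, by simp only at hc; omega⟩
    · left
      rw [← hps]
      push_neg at hc
      refine ⟨hpY, hpH, ?_⟩
      by_cases h1 : i < p.1
      · exact Or.inr (hc h1)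
      · exact Or.inl (by omega)
  · rintro (⟨hqY, hqH, hqc⟩ | ⟨hqY, hqi, hqj⟩)
    · refine ⟨q, ⟨hqY, hqH⟩, ?_⟩
      unfold shiftBox
      rw [if_neg]
      push_neg
      intro h1
      rcases hqc with h | h
      · omega
      · -- q.2 ≤ j; if also q.2 > j contradiction; so must show q.2 ≤ j
        omega
    · refine ⟨(q.1 + 1, q.2 + 1), ⟨hqY, ?_⟩, ?_⟩
      · rw [mem_hook]
        push_neg
        intro _
        constructor
        · intro hc; exfalso; simp only at hc; omega
        · intro hc; exfalso; simp only at hc; omega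
      · unfold shiftBox
        rw [if_pos (by simp only; omega)]
        simp

lemma removeHook_IsYD {Y : Finset (ℕ × ℕ)} (hY : IsYD Y) {i j : ℕ} (hij : (i, j) ∈ Y) :
    IsYD (removeHook Y i j) := by
  have hi : 1 ≤ i := (hY.1 _ hij).1
  have hj : 1 ≤ j := (hY.1 _ hij).2
  constructor
  · intro p hp
    rw [mem_removeHook hY hij] at hp
    rcases hp with ⟨hpY, _, _⟩ | ⟨_, h1, h2⟩
    · exact hY.1 _ hpY
    · omega
  · intro p hp q hq1 hq2 hq3 hq4
    rw [mem_removeHook hY hij] at hp ⊢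
    rcases hp with ⟨hpY, hpH, hpc⟩ | ⟨hpY, hpi, hpj⟩
    · left
      refine ⟨hY.2 _ hpY q hq1 hq2 hq3 hq4, ?_, by omega⟩
      rw [mem_hook]
      push_neg
      intro hqY
      constructor
      · intro hqi
        by_contra hc
        push_neg at hc
        -- q.1 = i, j ≤ q.2 ; so p.1 ≥ i, p.2 ≥ j
        have hp1 : p.1 = i ∨ i < p.1 := by omega
        rcases hp1 with h | h
        · exact hpH (mem_hook.mpr ⟨hpY, Or.inl ⟨h, by omega⟩⟩)
        · have hp2 : p.2 = j ∨ j < p.2 := by omega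
          rcases hp2 with h2 | h2
          · exact hpH (mem_hook.mpr ⟨hpY, Or.inr ⟨h2, by omega⟩⟩)
          · rcases hpc with hc1 | hc1 <;> omega
      · intro hqj
        by_contra hc
        push_neg at hc
        have hp2 : p.2 = j ∨ j < p.2 := by omega
        rcases hp2 with h2 | h2
        · exact hpH (mem_hook.mpr ⟨hpY, Or.inr ⟨h2, by omega⟩⟩)
        · have hp1 : p.1 = i ∨ i < p.1 := by omega
          rcases hp1 with h | h
          · exact hpH (mem_hook.mpr ⟨hpY, Or.inl ⟨h, by omega⟩⟩)
          · rcases hpc with hc1 | hc1 <;> omega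
    · by_cases hqc : i ≤ q.1 ∧ j ≤ q.2
      · right
        refine ⟨hY.2 _ hpY (q.1 + 1, q.2 + 1) (by dsimp only; omega) (by dsimp only; omega)
          (by dsimp only; omega) (by dsimp only; omega), hqc.1, hqc.2⟩
      · left
        push_neg at hqc
        have hqY : q ∈ Y := hY.2 _ hpY q hq1 hq2 (by omega) (by omega)
        refine ⟨hqY, ?_, by omega⟩
        rw [mem_hook]
        push_neg
        intro _
        constructor
        · intro hqi
          have := hqc (by omega)
          omega
        · intro hqj2
          by_contra hc
          push_neg at hc
          have := hqc hc
          omega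

lemma removeHook_subset_rect {Y : Finset (ℕ × ℕ)} {m n : ℕ} (hY : IsYD Y)
    (hsub : Y ⊆ rect m n) {i j : ℕ} (hij : (i, j) ∈ Y) :
    removeHook Y i j ⊆ rect m n := by
  have hi : 1 ≤ i := (hY.1 _ hij).1
  have hj : 1 ≤ j := (hY.1 _ hij).2
  intro q hq
  rw [mem_removeHook hY hij] at hq
  rcases hq with ⟨hqY, _, _⟩ | ⟨hqY, h1, h2⟩
  · exact hsub hqY
  · have := mem_rect.mp (hsub hqY)
    rw [mem_rect]
    omega

lemma dk_removeHook {Y : Finset (ℕ × ℕ)} (hY : IsYD Y) {i j : ℕ} (hij : (i, j) ∈ Y) (k : ℤ) :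
    dk (removeHook Y i j) k = dk Y k - dk (hook Y i j) k := by
  classical
  have hi : 1 ≤ i := (hY.1 _ hij).1
  have hj : 1 ≤ j := (hY.1 _ hij).2
  have hdiag : ∀ p ∈ Y \ hook Y i j,
      ((shiftBox i j p).2 : ℤ) - (shiftBox i j p).1 = (p.2 : ℤ) - p.1 := by
    intro p hp
    rw [Finset.mem_sdiff] at hp
    have hp1 : 1 ≤ p.1 := (hY.1 _ hp.1).1
    have hp2 : 1 ≤ p.2 := (hY.1 _ hp.1).2
    unfold shiftBox
    split_ifs with hc
    · simp only; omega
    · rfl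
  have hinj : Set.InjOn (shiftBox i j) (Y \ hook Y i j) := by
    intro p hp q hq heq
    simp only [Set.mem_diff, Finset.mem_coe, Finset.coe_sdiff] at hp hq
    have hp1 : 1 ≤ p.1 := (hY.1 _ hp.1).1
    have hp2 : 1 ≤ p.2 := (hY.1 _ hp.1).2
    have hq1 : 1 ≤ q.1 := (hY.1 _ hq.1).1
    have hq2 : 1 ≤ q.2 := (hY.1 _ hq.1).2
    have hpH : p ∉ hook Y i j := hp.2
    have hqH : q ∉ hook Y i j := hq.2
    unfold shiftBox at heq
    split_ifs at heq with h1 h2 h2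
    · rcases p with ⟨a,b⟩; rcases q with ⟨c,d⟩
      simp only at h1 h2 heq ⊢
      rw [Prod.mk.injEq] at heq ⊢
      omega
    · -- p shifted, q not: q = (p.1-1, p.2-1), q.1 ≥ i, q.2 ≥ j, not strict both
      exfalso
      apply hqH
      rw [mem_hook]
      rcases p with ⟨a,b⟩; rcases q with ⟨c,d⟩
      simp only at h1 h2 heq ⊢
      rw [Prod.mk.injEq] at heq
      push_neg at h2
      refine ⟨hq.1, ?_⟩
      by_cases hci : c = i
      · exact Or.inl ⟨hci, by omega⟩
      · have : d = j := by omega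
        exact Or.inr ⟨this, by omega⟩
    · exfalso
      apply hpH
      rw [mem_hook]
      rcases p with ⟨a,b⟩; rcases q with ⟨c,d⟩
      simp only at h1 h2 heq ⊢
      rw [Prod.mk.injEq] at heq
      push_neg at h1
      refine ⟨hp.1, ?_⟩
      by_cases hci : a = i
      · exact Or.inl ⟨hci, by omega⟩
      · have : b = j := by omega
        exact Or.inr ⟨this, by omega⟩
    · exact heq
  have hHsub : hook Y i j ⊆ Y := Finset.filter_subset _ _
  unfold removeHook dk
  rw [Finset.filter_image]
  rw [Finset.card_image_of_injOn (hinj.mono (by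
    intro x hx
    simp only [Finset.coe_filter, Set.mem_setOf_eq, Finset.mem_sdiff] at hx
    simp only [Set.mem_diff, Finset.mem_coe, Finset.coe_sdiff]
    exact ⟨hx.1.1, hx.1.2⟩))]
  have hfc : Finset.filter (fun a => ((shiftBox i j a).2 : ℤ) - (shiftBox i j a).1 = k)
      (Y \ hook Y i j) = Finset.filter (fun p => (p.2 : ℤ) - p.1 = k) (Y \ hook Y i j) := by
    apply Finset.filter_congr
    intro x hx
    rw [hdiag x hx]
  rw [hfc]
  have hsd : Finset.filter (fun p => (p.2 : ℤ) - p.1 = k) (Y \ hook Y i j) =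
      Finset.filter (fun p => (p.2 : ℤ) - p.1 = k) Y \
      Finset.filter (fun p => (p.2 : ℤ) - p.1 = k) (hook Y i j) := by
    ext x
    simp only [Finset.mem_sdiff, Finset.mem_filter]
    tauto
  rw [hsd, Finset.card_sdiff_of_subset (Finset.filter_subset_filter _ hHsub)]
  have : Finset.filter (fun p => (p.2:ℤ) - p.1 = k) (hook Y i j) ⊆
      Finset.filter (fun p => (p.2:ℤ) - p.1 = k) Y := Finset.filter_subset_filter _ hHsub
  have := Finset.card_le_card this
  omega

end Dev4
section Dev5

/-- the value of the unimodal numbering on diagonal `k` -/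
def tent (m n : ℕ) (k : ℤ) : ℤ := min (k + m) ((n : ℤ) - k)

lemma unimodal_eq_tent (m n : ℕ) (p : ℕ × ℕ) :
    unimodal m n p = tent m n ((p.2 : ℤ) - p.1) := by
  unfold unimodal tent
  omega

/-- sum of the tent function over an interval -/
noncomputable def Tsum (m n : ℕ) (l r : ℤ) : ℤ := ∑ k ∈ Finset.Icc l r, tent m n k

lemma Amul_hook {Y : Finset (ℕ × ℕ)} (hY : IsYD Y) {i j : ℕ} (hij : (i, j) ∈ Y) (m n : ℕ) :
    Amul m n (hook Y i j) =
      (Finset.Icc ((j : ℤ) - colLen Y j) ((rowLen Y i : ℤ) - i)).val.map (tent m n) := by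
  have hi : 1 ≤ i := (hY.1 _ hij).1
  have hj : 1 ≤ j := (hY.1 _ hij).2
  unfold Amul
  rw [hook_eq hY hij]
  rw [Finset.image_val_of_injOn (hookBox_injOn i j hi hj)]
  rw [Multiset.map_map]
  apply Multiset.map_congr rfl
  intro k _
  simp only [Function.comp_apply]
  rw [unimodal_eq_tent, hookBox_diag i j hi hj]

lemma Amul_card_sum {m n : ℕ} {l r : ℤ} :
    Multiset.card ((Finset.Icc l r).val.map (tent m n)) = (Finset.Icc l r).card ∧
    ((Finset.Icc l r).val.map (tent m n)).sum = Tsum m n l r := by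
  constructor
  · rw [Multiset.card_map]; rfl
  · rfl

lemma Icc_insert_top {l r : ℤ} (h : l ≤ r + 1) :
    Finset.Icc l (r + 1) = insert (r + 1) (Finset.Icc l r) := by
  ext x
  simp only [Finset.mem_Icc, Finset.mem_insert]
  omega

lemma Icc_insert_bot {l r : ℤ} (h : l ≤ r + 1) :
    Finset.Icc l (r + 1) = insert l (Finset.Icc (l + 1) (r + 1)) := by
  ext x
  simp only [Finset.mem_Icc, Finset.mem_insert]
  omega

lemma Tsum_shift (m n : ℕ) {l r : ℤ} (h : l ≤ r) :
    Tsum m n (l + 1) (r + 1) = Tsum m n l r + tent m n (r + 1) - tent m n l := by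
  unfold Tsum
  have h1 : Finset.Icc l (r+1) = insert (r+1) (Finset.Icc l r) := Icc_insert_top (by omega)
  have h2 : Finset.Icc l (r+1) = insert l (Finset.Icc (l+1) (r+1)) := Icc_insert_bot (by omega)
  have e1 : ∑ k ∈ Finset.Icc l (r+1), tent m n k
      = tent m n (r+1) + ∑ k ∈ Finset.Icc l r, tent m n k := by
    rw [h1, Finset.sum_insert (by simp only [Finset.mem_Icc]; omega)]
  have e2 : ∑ k ∈ Finset.Icc l (r+1), tent m n k
      = tent m n l + ∑ k ∈ Finset.Icc (l+1) (r+1), tent m n k := by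
    rw [h2, Finset.sum_insert (by simp only [Finset.mem_Icc]; omega)]
  omega

lemma Icc_mirror {l r s : ℤ} :
    Finset.Icc (s - r) (s - l) = (Finset.Icc l r).image (fun k => s - k) := by
  ext x
  simp only [Finset.mem_Icc, Finset.mem_image]
  constructor
  · intro h; exact ⟨s - x, by omega, by omega⟩
  · rintro ⟨y, hy, rfl⟩; omega

lemma tent_mirror {m n : ℕ} (k : ℤ) : tent m n ((n : ℤ) - m - k) = tent m n k := by
  unfold tent; omega

lemma Tsum_mirror (m n : ℕ) (l r : ℤ) :
    Tsum m n ((n : ℤ) - m - r) ((n : ℤ) - m - l) = Tsum m n l r := by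
  unfold Tsum
  rw [Icc_mirror]
  rw [Finset.sum_image (fun x _ y _ h => by omega)]
  apply Finset.sum_congr rfl
  intro x _
  exact tent_mirror x

lemma mirror_multiset (m n : ℕ) (l r : ℤ) :
    (Finset.Icc ((n:ℤ) - m - r) ((n:ℤ) - m - l)).val.map (tent m n)
      = (Finset.Icc l r).val.map (tent m n) := by
  rw [Icc_mirror]
  rw [Finset.image_val_of_injOn (fun x _ y _ h => by omega)]
  rw [Multiset.map_map]
  apply Multiset.map_congr rfl
  intro x _
  simp only [Function.comp_apply]
  exact tent_mirror x

lemma Tsum_strict_mono (m n : ℕ) : ∀ (d : ℕ), ∀ l r : ℤ, l ≤ r →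
    (l + d) + (r + d) ≤ (n : ℤ) - m → 0 < d →
      Tsum m n l r < Tsum m n (l + d) (r + d) := by
  intro d
  induction d with
  | zero => intro l r _ _ hd; exact absurd hd (lt_irrefl 0)
  | succ d ih =>
    intro l r hlr hsum _
    have hstep : Tsum m n l r < Tsum m n (l + 1) (r + 1) := by
      rw [Tsum_shift m n hlr]
      have h1 : tent m n l < tent m n (r + 1) := by
        unfold tent
        omega
      omega
    rw [show (l + ((d + 1 : ℕ) : ℤ)) = (l + 1) + d by push_cast; ring,
        show (r + ((d + 1 : ℕ) : ℤ)) = (r + 1) + d by push_cast; ring]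
    rcases Nat.eq_zero_or_pos d with h0 | h0
    · rw [h0]
      simpa using hstep
    · have := ih (l+1) (r+1) (by omega) (by push_cast at hsum ⊢; omega) h0
      omega

/-- recovery of an interval from its length and tent-sum, up to mirror -/
lemma interval_recover (m n : ℕ) {l r l' r' : ℤ} (h1 : l ≤ r) (h2 : l' ≤ r')
    (hlen : r - l = r' - l') (hsum : Tsum m n l r = Tsum m n l' r') :
    (l' = l ∧ r' = r) ∨ (l' = (n:ℤ) - m - r ∧ r' = (n:ℤ) - m - l) := by
  set s : ℤ := (n:ℤ) - m with hs
  -- normalize both intervals to the left of center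
  have key : ∀ a b a' b' : ℤ, a ≤ b → a' ≤ b' → b - a = b' - a' →
      a + b ≤ s → a' + b' ≤ s → Tsum m n a b = Tsum m n a' b' → a = a' := by
    intro a b a' b' hab hab' hlen' hc hc' hsum'
    by_contra hne
    rcases lt_or_gt_of_ne hne with hlt | hgt
    · have := Tsum_strict_mono m n (a' - a).toNat a b hab (by omega) (by omega)
      rw [show (((a' - a).toNat : ℤ)) = a' - a by omega] at this
      rw [show a + (a' - a) = a' by ring, show b + (a' - a) = b' by omega] at this
      omega
    · have := Tsum_strict_mono m n (a - a').toNat a' b' hab' (by omega) (by omega)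
      rw [show (((a - a').toNat : ℤ)) = a - a' by omega] at this
      rw [show a' + (a - a') = a by ring, show b' + (a - a') = b by omega] at this
      omega
  rcases le_or_gt (l + r) s with hc | hc
  · rcases le_or_gt (l' + r') s with hc' | hc'
    · left
      have := key l r l' r' h1 h2 (by omega) hc hc' hsum
      omega
    · right
      have hmir : Tsum m n (s - r') (s - l') = Tsum m n l' r' := Tsum_mirror m n l' r'
      have := key l r (s - r') (s - l') h1 (by omega) (by omega) hc (by omega)
        (by rw [hmir]; exact hsum)
      omega
  · rcases le_or_gt (l' + r') s with hc' | hc'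
    · right
      have hmir : Tsum m n (s - r) (s - l) = Tsum m n l r := Tsum_mirror m n l r
      have := key (s - r) (s - l) l' r' (by omega) h2 (by omega) (by omega) hc'
        (by rw [hmir]; exact hsum)
      omega
    · left
      have hmir : Tsum m n (s - r) (s - l) = Tsum m n l r := Tsum_mirror m n l r
      have hmir' : Tsum m n (s - r') (s - l') = Tsum m n l' r' := Tsum_mirror m n l' r'
      have := key (s - r) (s - l) (s - r') (s - l') (by omega) (by omega) (by omega)
        (by omega) (by omega) (by rw [hmir, hmir']; exact hsum)
      omega

end Dev5
section Dev6

lemma cut_notsame {a : ℤ → ℤ} {l r : ℤ} (hlr : l ≤ r) (hl : SCl a l) :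
    ¬ SCl (cut a l r) l := by
  have e1 : cut a l r l = a l - 1 := by unfold cut; rw [if_pos ⟨le_rfl, hlr⟩]
  have e2 : cut a l r (l - 1) = a (l - 1) := by
    unfold cut; rw [if_neg (by omega)]
  unfold SCl at hl ⊢
  rw [e1, e2]
  omega

lemma cut_self_sym {a : ℤ → ℤ} {l r s : ℤ} (hsym : ∀ k, a k = a (s - k))
    (hself : l + r = s) (k : ℤ) : cut a l r k = cut a l r (s - k) := by
  have h := hsym k
  unfold cut
  split_ifs <;> omega

lemma cut_cut_sym {a : ℤ → ℤ} {l r s : ℤ} (hsym : ∀ k, a k = a (s - k)) (k : ℤ) :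
    cut (cut a l r) (s - r) (s - l) k = cut (cut a l r) (s - r) (s - l) (s - k) := by
  have h := hsym k
  unfold cut
  split_ifs <;> omega

lemma cut_mirror_r {a : ℤ → ℤ} {l r s : ℤ}
    (hs : s = 0 ∨ s = 1)
    (hs1 : a l = a (s - l)) (hs2 : a (l - 1) = a (s - l + 1))
    (hs3 : a r = a (s - r)) (hs4 : a (r + 1) = a (s - r - 1))
    (hA : l ≤ 0 → a (l-1) ≤ a l ∧ a l ≤ a (l-1) + 1)
    (hB : 0 ≤ l - 1 → a l ≤ a (l-1) ∧ a (l-1) ≤ a l + 1)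
    (hC : 0 ≤ r → a (r+1) ≤ a r ∧ a r ≤ a (r+1) + 1)
    (hD : r + 1 ≤ 0 → a r ≤ a (r+1) ∧ a (r+1) ≤ a r + 1)
    (hC1 : s = 2*l - 1 → a l = a (l-1))
    (hC2 : s = 2*r + 1 → a r = a (r+1))
    (hC3 : s = l + r + 1 → a l = a (r+1))
    (hC4 : s = l + r - 1 → a (l-1) = a r)
    (hn1 : 0 ≤ a (l-1)) (hn2 : 0 ≤ a l) (hn3 : 0 ≤ a r) (hn4 : 0 ≤ a (r+1))
    (hlr : l ≤ r) (hne : l + r ≠ s) (hr : SCr a r) (hl : SCl a l) :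
    SCr (cut a l r) (s - l) := by
  unfold SCr at hr ⊢
  unfold SCl at hl
  unfold cut
  split_ifs <;> omega

lemma cut_mirror_l {a : ℤ → ℤ} {l r s : ℤ}
    (hs : s = 0 ∨ s = 1)
    (hs1 : a l = a (s - l)) (hs2 : a (l - 1) = a (s - l + 1))
    (hs3 : a r = a (s - r)) (hs4 : a (r + 1) = a (s - r - 1))
    (hA : l ≤ 0 → a (l-1) ≤ a l ∧ a l ≤ a (l-1) + 1)
    (hB : 0 ≤ l - 1 → a l ≤ a (l-1) ∧ a (l-1) ≤ a l + 1)
    (hC : 0 ≤ r → a (r+1) ≤ a r ∧ a r ≤ a (r+1) + 1)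
    (hD : r + 1 ≤ 0 → a r ≤ a (r+1) ∧ a (r+1) ≤ a r + 1)
    (hC1 : s = 2*l - 1 → a l = a (l-1))
    (hC2 : s = 2*r + 1 → a r = a (r+1))
    (hC3 : s = l + r + 1 → a l = a (r+1))
    (hC4 : s = l + r - 1 → a (l-1) = a r)
    (hn1 : 0 ≤ a (l-1)) (hn2 : 0 ≤ a l) (hn3 : 0 ≤ a r) (hn4 : 0 ≤ a (r+1))
    (hlr : l ≤ r) (hne : l + r ≠ s) (hr : SCr a r) (hl : SCl a l) :
    SCl (cut a l r) (s - r) := by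
  unfold SCr at hr
  unfold SCl at hl ⊢
  unfold cut
  split_ifs <;> omega

/-- the mirror hook is available after cutting a non-self-mirrored hook -/
lemma cut_mirror {a : ℤ → ℤ} {l r s : ℤ} (hs : s = 0 ∨ s = 1)
    (hsym : ∀ k, a k = a (s - k))
    (hadj : ∀ k : ℤ, (k ≤ 0 → a (k-1) ≤ a k ∧ a k ≤ a (k-1) + 1) ∧
      (0 ≤ k → a (k+1) ≤ a k ∧ a k ≤ a (k+1) + 1))
    (hn : ∀ k, 0 ≤ a k)
    (hlr : l ≤ r) (hne : l + r ≠ s) (hr : SCr a r) (hl : SCl a l) :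
    SCr (cut a l r) (s - l) ∧ SCl (cut a l r) (s - r) := by
  have hs1 : a l = a (s - l) := hsym l
  have hs2 : a (l - 1) = a (s - l + 1) := by
    have := hsym (l - 1); rwa [show s - (l - 1) = s - l + 1 by ring] at this
  have hs3 : a r = a (s - r) := hsym r
  have hs4 : a (r + 1) = a (s - r - 1) := by
    have := hsym (r + 1); rwa [show s - (r + 1) = s - r - 1 by ring] at this
  have hA : l ≤ 0 → a (l-1) ≤ a l ∧ a l ≤ a (l-1) + 1 := (hadj l).1
  have hB : 0 ≤ l - 1 → a l ≤ a (l-1) ∧ a (l-1) ≤ a l + 1 := by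
    intro h
    have := (hadj (l-1)).2 h
    rwa [show l - 1 + 1 = l by ring] at this
  have hC : 0 ≤ r → a (r+1) ≤ a r ∧ a r ≤ a (r+1) + 1 := (hadj r).2
  have hD : r + 1 ≤ 0 → a r ≤ a (r+1) ∧ a (r+1) ≤ a r + 1 := by
    intro h
    have := (hadj (r+1)).1 h
    rwa [show r + 1 - 1 = r by ring] at this
  have hC1 : s = 2*l - 1 → a l = a (l-1) := by
    intro h
    have := hsym l
    rwa [show s - l = l - 1 by omega] at this
  have hC2 : s = 2*r + 1 → a r = a (r+1) := by
    intro h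
    have := hsym r
    rwa [show s - r = r + 1 by omega] at this
  have hC3 : s = l + r + 1 → a l = a (r+1) := by
    intro h
    have := hsym l
    rwa [show s - l = r + 1 by omega] at this
  have hC4 : s = l + r - 1 → a (l-1) = a r := by
    intro h
    have := hsym (l-1)
    rwa [show s - (l-1) = r by omega] at this
  exact ⟨cut_mirror_r hs hs1 hs2 hs3 hs4 hA hB hC hD hC1 hC2 hC3 hC4
      (hn (l-1)) (hn l) (hn r) (hn (r+1)) hlr hne hr hl,
    cut_mirror_l hs hs1 hs2 hs3 hs4 hA hB hC hD hC1 hC2 hC3 hC4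
      (hn (l-1)) (hn l) (hn r) (hn (r+1)) hlr hne hr hl⟩

end Dev6
section Dev7

lemma move_preserves {m n : ℕ} (hs : (n:ℤ) - m = 0 ∨ (n:ℤ) - m = 1)
    {Y Y' : Finset (ℕ × ℕ)} (hY : IsYD Y) (hsub : Y ⊆ rect m n)
    (hsym : ∀ k, dk Y k = dk Y ((n:ℤ) - m - k)) (hmv : Move m n Y Y') :
    IsYD Y' ∧ Y' ⊆ rect m n ∧ ∀ k, dk Y' k = dk Y' ((n:ℤ) - m - k) := by
  classical
  obtain ⟨i, j, hij, hbr⟩ := hmv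
  set s : ℤ := (n:ℤ) - m with hsdef
  set a : ℤ → ℤ := dk Y with hadef
  set l : ℤ := (j:ℤ) - colLen Y j with hldef
  set r : ℤ := (rowLen Y i : ℤ) - i with hrdef
  obtain ⟨hSCr, hSCl, hb1, hb2⟩ := SC_of_box hY hij
  have hlr : l ≤ r := le_trans hb1 hb2
  have hY₁ : IsYD (removeHook Y i j) := removeHook_IsYD hY hij
  have hsub₁ : removeHook Y i j ⊆ rect m n := removeHook_subset_rect hY hsub hij
  have hdk₁ : ∀ k, dk (removeHook Y i j) k = cut a l r k := by
    intro k
    rw [dk_removeHook hY hij k, dk_hook hY hij k]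
    have hak : a k = dk Y k := rfl
    unfold cut
    split_ifs <;> omega
  have hadj : ∀ k : ℤ, (k ≤ 0 → a (k-1) ≤ a k ∧ a k ≤ a (k-1) + 1) ∧
      (0 ≤ k → a (k+1) ≤ a k ∧ a k ≤ a (k+1) + 1) := fun k => dk_adj hY k
  have hnn : ∀ k, 0 ≤ a k := fun k => dk_nonneg Y k
  have htransl : ∀ x, SCl (dk (removeHook Y i j)) x ↔ SCl (cut a l r) x := by
    intro x
    unfold SCl
    rw [hdk₁ x, hdk₁ (x-1)]
  have htransr : ∀ x, SCr (dk (removeHook Y i j)) x ↔ SCr (cut a l r) x := by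
    intro x
    unfold SCr
    rw [hdk₁ x, hdk₁ (x+1)]
  -- matching analysis
  have hmatch : ∀ i' j' : ℕ, (i', j') ∈ removeHook Y i j →
      Amul m n (hook (removeHook Y i j) i' j') = Amul m n (hook Y i j) →
      ((j':ℤ) - colLen (removeHook Y i j) j' = s - r ∧
        (rowLen (removeHook Y i j) i' : ℤ) - i' = s - l) ∧ l + r ≠ s := by
    intro i' j' hij' hAm
    set l' : ℤ := (j':ℤ) - colLen (removeHook Y i j) j' with hl'def
    set r' : ℤ := (rowLen (removeHook Y i j) i' : ℤ) - i' with hr'def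
    obtain ⟨hSCr', hSCl', hc1, hc2⟩ := SC_of_box hY₁ hij'
    have hlr' : l' ≤ r' := le_trans hc1 hc2
    rw [Amul_hook hY₁ hij', Amul_hook hY hij] at hAm
    rw [← hl'def, ← hr'def, ← hldef, ← hrdef] at hAm
    have hcard : (Finset.Icc l' r').card = (Finset.Icc l r).card := by
      have := congrArg Multiset.card hAm
      rwa [Multiset.card_map, Multiset.card_map] at this
    have hlen : r - l = r' - l' := by
      rw [Int.card_Icc, Int.card_Icc] at hcard
      omega
    have hsum : Tsum m n l r = Tsum m n l' r' := (congrArg Multiset.sum hAm).symm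
    have hrec := interval_recover m n hlr hlr' hlen hsum
    have hnot : ¬ (l' = l ∧ r' = r) := by
      rintro ⟨he1, he2⟩
      have hscl' : SCl (cut a l r) l' := (htransl l').mp hSCl'
      rw [he1] at hscl'
      exact cut_notsame hlr hSCl hscl'
    rcases hrec with h | ⟨he1, he2⟩
    · exact absurd h hnot
    · refine ⟨⟨by rw [← hsdef] at he1; omega, by rw [← hsdef] at he2; omega⟩, ?_⟩
      intro hself
      exact hnot ⟨by omega, by omega⟩
  rcases hbr with ⟨hY'eq, hno⟩ | ⟨i', j', hij', hAm, hY'eq⟩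
  · -- single hook removal: must be self-mirrored
    have hself : l + r = s := by
      by_contra hne
      obtain ⟨hmr, hml⟩ := cut_mirror hs hsym hadj hnn hlr hne hSCr hSCl
      have hscr1 : SCr (dk (removeHook Y i j)) (s - l) := (htransr _).mpr hmr
      have hscl1 : SCl (dk (removeHook Y i j)) (s - r) := (htransl _).mpr hml
      obtain ⟨i', j', hij', _, _, hre, hce⟩ := box_of_SC hY₁ (by omega) hscr1 hscl1
      apply hno
      refine ⟨i', j', hij', ?_⟩
      rw [Amul_hook hY₁ hij', Amul_hook hY hij, hre, hce, ← hldef, ← hrdef]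
      rw [hsdef]
      exact mirror_multiset m n l r
    refine ⟨by rw [hY'eq]; exact hY₁, by rw [hY'eq]; exact hsub₁, ?_⟩
    intro k
    rw [hY'eq, hdk₁ k, hdk₁ (s - k)]
    exact cut_self_sym hsym hself k
  · -- double hook removal
    obtain ⟨⟨hce, hre⟩, hne⟩ := hmatch i' j' hij' hAm
    have hY₂ : IsYD Y' := by rw [hY'eq]; exact removeHook_IsYD hY₁ hij'
    have hsub₂ : Y' ⊆ rect m n := by
      rw [hY'eq]; exact removeHook_subset_rect hY₁ hsub₁ hij'
    refine ⟨hY₂, hsub₂, ?_⟩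
    have hdk₂ : ∀ k, dk Y' k = cut (cut a l r) (s - r) (s - l) k := by
      intro k
      rw [hY'eq, dk_removeHook hY₁ hij' k, dk_hook hY₁ hij' k, hdk₁ k]
      unfold cut
      split_ifs <;> omega
    intro k
    rw [hdk₂ k, hdk₂ (s - k)]
    exact cut_cut_sym hsym k

end Dev7
section Dev8

lemma realize {m n : ℕ} (b : ℤ → ℤ) (hb0 : ∀ k, 0 ≤ b k)
    (hbR : ∀ k, b k ≤ dk (rect m n) k)
    (hadjb : ∀ k : ℤ, (k ≤ 0 → b (k-1) ≤ b k ∧ b k ≤ b (k-1) + 1) ∧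
      (0 ≤ k → b (k+1) ≤ b k ∧ b k ≤ b (k+1) + 1)) :
    ∃ Z : Finset (ℕ × ℕ), IsYD Z ∧ Z ⊆ rect m n ∧ ∀ k, dk Z k = b k := by
  classical
  set Z : Finset (ℕ × ℕ) :=
    (rect m n).filter (fun p => (min p.1 p.2 : ℤ) ≤ b ((p.2:ℤ) - p.1)) with hZdef
  have hmemZ : ∀ p : ℕ × ℕ, p ∈ Z ↔
      p ∈ rect m n ∧ (min p.1 p.2 : ℤ) ≤ b ((p.2:ℤ) - p.1) := by
    intro p; rw [hZdef, Finset.mem_filter]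
  have hstep1 : ∀ p : ℕ × ℕ, p ∈ Z → 2 ≤ p.1 → (p.1 - 1, p.2) ∈ Z := by
    intro p hp h2
    rw [hmemZ] at hp ⊢
    obtain ⟨hpr, hpb⟩ := hp
    rw [mem_rect] at hpr
    refine ⟨mem_rect.mpr (by dsimp only; omega), ?_⟩
    set k : ℤ := (p.2 : ℤ) - p.1 with hk
    have he : ((p.1 - 1, p.2).2 : ℤ) - ((p.1 - 1, p.2).1 : ℤ) = k + 1 := by
      dsimp only; omega
    rw [he]
    have h1 := (hadjb (k+1)).1
    rw [show k + 1 - 1 = k by ring] at h1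
    have h2' := (hadjb k).2
    dsimp only
    omega
  have hstep2 : ∀ p : ℕ × ℕ, p ∈ Z → 2 ≤ p.2 → (p.1, p.2 - 1) ∈ Z := by
    intro p hp h2
    rw [hmemZ] at hp ⊢
    obtain ⟨hpr, hpb⟩ := hp
    rw [mem_rect] at hpr
    refine ⟨mem_rect.mpr (by dsimp only; omega), ?_⟩
    set k : ℤ := (p.2 : ℤ) - p.1 with hk
    have he : ((p.1, p.2 - 1).2 : ℤ) - ((p.1, p.2 - 1).1 : ℤ) = k - 1 := by
      dsimp only; omega
    rw [he]
    have h1 := (hadjb k).1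
    have h2' := (hadjb (k-1)).2
    rw [show k - 1 + 1 = k by ring] at h2'
    dsimp only
    omega
  have hmain : ∀ d : ℕ, ∀ p ∈ Z, ∀ q : ℕ × ℕ, 1 ≤ q.1 → 1 ≤ q.2 →
      q.1 ≤ p.1 → q.2 ≤ p.2 → (p.1 - q.1) + (p.2 - q.2) ≤ d → q ∈ Z := by
    intro d
    induction d with
    | zero =>
      intro p hp q h1 h2 h3 h4 h5
      have : q = p := by
        rcases p with ⟨x,y⟩; rcases q with ⟨u,v⟩
        simp only at h1 h2 h3 h4 h5 ⊢
        rw [Prod.mk.injEq]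
        omega
      rw [this]; exact hp
    | succ d ih =>
      intro p hp q h1 h2 h3 h4 h5
      rcases Nat.lt_or_ge (p.1 - q.1 + (p.2 - q.2)) 1 with h | h
      · have : q = p := by
          rcases p with ⟨x,y⟩; rcases q with ⟨u,v⟩
          simp only at h1 h2 h3 h4 h5 h ⊢
          rw [Prod.mk.injEq]
          omega
        rw [this]; exact hp
      · rcases Nat.lt_or_ge q.1 p.1 with hlt | hge
        · have hp' : (p.1 - 1, p.2) ∈ Z := hstep1 p hp (by omega)
          exact ih _ hp' q h1 h2 (by dsimp only; omega) (by dsimp only; omega)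
            (by dsimp only; omega)
        · have hlt2 : q.2 < p.2 := by omega
          have hp' : (p.1, p.2 - 1) ∈ Z := hstep2 p hp (by omega)
          exact ih _ hp' q h1 h2 (by dsimp only; omega) (by dsimp only; omega)
            (by dsimp only; omega)
  have hZYD : IsYD Z := by
    constructor
    · intro p hp
      rw [hmemZ] at hp
      have := mem_rect.mp hp.1
      omega
    · intro p hp q h1 h2 h3 h4
      exact hmain (p.1 - q.1 + (p.2 - q.2)) p hp q h1 h2 h3 h4 le_rfl
  refine ⟨Z, hZYD, Finset.filter_subset _ _, ?_⟩
  intro k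
  have hbrk := hbR k
  rw [dk_rect] at hbrk
  have := hb0 k
  have hval : dk Z k = max 0 (b k) := by
    apply dk_from_mem hZYD
    intro t ht
    rw [hmemZ]
    constructor
    · rintro ⟨hrect, hb⟩
      unfold diagBox at hb
      simp only at hb
      rw [show ((t + k.toNat : ℕ) : ℤ) - ((t + (-k).toNat : ℕ) : ℤ) = k by omega] at hb
      omega
    · intro hb
      have hrect : diagBox k t ∈ rect m n := by
        rw [mem_rect]
        unfold diagBox
        constructor
        · omega
        constructor
        · omega
        constructor
        · omega
        · omega
      refine ⟨hrect, ?_⟩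
      unfold diagBox
      simp only
      rw [show ((t + k.toNat : ℕ) : ℤ) - ((t + (-k).toNat : ℕ) : ℤ) = k by omega]
      omega
  rw [hval]
  omega

end Dev8
section Dev9

set_option maxHeartbeats 1200000 in
lemma badj_aux {a : ℤ → ℤ} {s ρ k : ℤ} (h0 : 0 ≤ s) (h1 : s ≤ 1) (h2 : s ≤ ρ)
    (hA : k ≤ 0 → a (k-1) ≤ a k ∧ a k ≤ a (k-1) + 1)
    (hB : 0 ≤ k - 1 → a k ≤ a (k-1) ∧ a (k-1) ≤ a k + 1)
    (hC : 0 ≤ k → a (k+1) ≤ a k ∧ a k ≤ a (k+1) + 1)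
    (hD : k + 1 ≤ 0 → a k ≤ a (k+1) ∧ a (k+1) ≤ a k + 1)
    (ht : a ρ = a (ρ+1)) (hm1 : a (s-ρ) = a ρ) (hm2 : a (s-ρ-1) = a (ρ+1))
    (hx3 : k - 1 = s - ρ - 1 → a (k-1) = a (s-ρ-1))
    (hx4 : k = ρ → a k = a ρ)
    (hx6 : k = s - ρ → a k = a (s-ρ))
    (hx9 : k + 1 = ρ + 1 → a (k+1) = a (ρ+1))
    :
    (k ≤ 0 →
      (if s-ρ ≤ k-1 ∧ k-1 ≤ ρ then a (k-1) + 1 else a (k-1)) ≤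
        (if s-ρ ≤ k ∧ k ≤ ρ then a k + 1 else a k) ∧
      (if s-ρ ≤ k ∧ k ≤ ρ then a k + 1 else a k) ≤
        (if s-ρ ≤ k-1 ∧ k-1 ≤ ρ then a (k-1) + 1 else a (k-1)) + 1) ∧
    (0 ≤ k →
      (if s-ρ ≤ k+1 ∧ k+1 ≤ ρ then a (k+1) + 1 else a (k+1)) ≤
        (if s-ρ ≤ k ∧ k ≤ ρ then a k + 1 else a k) ∧
      (if s-ρ ≤ k ∧ k ≤ ρ then a k + 1 else a k) ≤
        (if s-ρ ≤ k+1 ∧ k+1 ≤ ρ then a (k+1) + 1 else a (k+1)) + 1) := by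
  split_ifs <;> omega

lemma step_up {m n : ℕ} (hm : 1 ≤ m) (hs : (n:ℤ) - m = 0 ∨ (n:ℤ) - m = 1)
    {Y : Finset (ℕ × ℕ)} (hY : IsYD Y) (hsub : Y ⊆ rect m n)
    (hsym : ∀ k, dk Y k = dk Y ((n:ℤ) - m - k)) (hne : Y ≠ rect m n) :
    ∃ Z : Finset (ℕ × ℕ), IsYD Z ∧ Z ⊆ rect m n ∧
      (∀ k, dk Z k = dk Z ((n:ℤ) - m - k)) ∧ Move m n Z Y := by
  classical
  set s : ℤ := (n:ℤ) - m with hsdef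
  set a : ℤ → ℤ := dk Y with hadef
  have hak : ∀ k, a k = dk Y k := fun _ => rfl
  have hs0 : 0 ≤ s ∧ s ≤ 1 := by rcases hs with h | h <;> omega
  have hP : ∃ u : ℕ, a (s + u) = a (s + u + 1) := by
    refine ⟨(n : ℤ).toNat - s.toNat, ?_⟩
    have he : s + (((n:ℤ).toNat - s.toNat : ℕ) : ℤ) = n := by omega
    rw [he]
    rw [hak, hak, dk_zero_right hsub (Or.inr le_rfl),
      dk_zero_right hsub (Or.inr (by omega))]
  set t := Nat.find hP with htdef
  have ht : a (s + (t:ℤ)) = a (s + (t:ℤ) + 1) := Nat.find_spec hP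
  have hmin : ∀ u : ℕ, u < t → ¬ (a (s + u) = a (s + u + 1)) := fun u hu => Nat.find_min hP hu
  set ρ : ℤ := s + (t:ℤ) with hρdef
  have hρs : s ≤ ρ := by omega
  have hρn : ρ ≤ n := by
    have : t ≤ (n:ℤ).toNat - s.toNat := by
      apply Nat.find_le
      have he : s + (((n:ℤ).toNat - s.toNat : ℕ) : ℤ) = n := by omega
      rw [he]
      rw [hak, hak, dk_zero_right hsub (Or.inr le_rfl),
        dk_zero_right hsub (Or.inr (by omega))]
    omega
  have hstrict : ∀ k, s ≤ k → k < ρ → a k = a (k+1) + 1 := by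
    intro k h1 h2
    have hu := hmin (k - s).toNat (by omega)
    rw [show s + (((k - s).toNat : ℕ) : ℤ) = k by omega] at hu
    have hadj : a (k+1) ≤ a k ∧ a k ≤ a (k+1) + 1 := (dk_adj hY k).2 (by omega)
    omega
  have hchain : ∀ d : ℕ, ∀ k, s ≤ k → k + d = ρ → a k = a ρ + d := by
    intro d
    induction d with
    | zero =>
      intro k h1 h2
      have : k = ρ := by omega
      rw [this]; simp
    | succ d ih =>
      intro k h1 h2
      have h3 := hstrict k h1 (by omega)
      have h4 := ih (k+1) (by omega) (by omega)
      omega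
  have haρ1 : a (ρ+1) ≤ dk (rect m n) (ρ+1) := by rw [hak]; exact dk_mono hsub _
  have hρltn : ρ < n := by
    rcases lt_or_ge ρ n with h | h
    · exact h
    · exfalso
      have hρeq : ρ = n := by omega
      apply hne
      apply YD_ext hY (rect_IsYD m n)
      intro k
      rw [← hak, dk_rect]
      have haρ : a ρ = 0 := by
        rw [hak, hρeq]; exact dk_zero_right hsub (Or.inr le_rfl)
      rcases le_or_gt s k with hk1 | hk1
      · rcases le_or_gt k n with hk2 | hk2
        · have := hchain (n - k).toNat k hk1 (by omega)
          omega
        · rw [hak k, dk_zero_right hsub (Or.inr (by omega))]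
          omega
      · have hsymk : a k = a (s - k) := hsym k
        rcases le_or_gt (s - k) n with hk2 | hk2
        · have := hchain (n - (s - k)).toNat (s - k) (by omega) (by omega)
          omega
        · have : a (s - k) = 0 := by
            rw [hak]; exact dk_zero_right hsub (Or.inr (by omega))
          omega
  have hbound : ∀ k, s ≤ k → k ≤ ρ → a k + 1 ≤ dk (rect m n) k := by
    intro k h1 h2
    have hch := hchain (ρ - k).toNat k h1 (by omega)
    have hR1 := dk_rect m n (ρ+1)
    have hR2 := dk_rect m n k
    rw [hR1] at haρ1
    rw [hR2]
    omega
  -- the enlarged sequence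
  set b : ℤ → ℤ := fun k => if s - ρ ≤ k ∧ k ≤ ρ then a k + 1 else a k with hbdef
  have hbk : ∀ k, b k = if s - ρ ≤ k ∧ k ≤ ρ then a k + 1 else a k := fun _ => rfl
  have hb0 : ∀ k, 0 ≤ b k := by
    intro k
    have := dk_nonneg Y k
    rw [← hak] at this
    rw [hbk]
    split_ifs <;> omega
  have hbR : ∀ k, b k ≤ dk (rect m n) k := by
    intro k
    rw [hbk]
    split_ifs with hin
    · rcases le_or_gt s k with hk1 | hk1
      · exact hbound k hk1 hin.2
      · have hsymk : a k = a (s - k) := hsym k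
        have hb2 := hbound (s - k) (by omega) (by omega)
        have hR1 := dk_rect m n (s - k)
        have hR2 := dk_rect m n k
        rw [hR1] at hb2
        rw [hR2]
        omega
    · rw [hak]; exact dk_mono hsub k
  have hm1 : a (s - ρ) = a ρ := (hsym ρ).symm
  have hm2 : a (s - ρ - 1) = a (ρ + 1) := by
    have := hsym (ρ + 1)
    rw [show s - (ρ + 1) = s - ρ - 1 by ring] at this
    exact this.symm
  have hadjb : ∀ k : ℤ, (k ≤ 0 → b (k-1) ≤ b k ∧ b k ≤ b (k-1) + 1) ∧
      (0 ≤ k → b (k+1) ≤ b k ∧ b k ≤ b (k+1) + 1) := by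
    intro k
    have hA : k ≤ 0 → a (k-1) ≤ a k ∧ a k ≤ a (k-1) + 1 := (dk_adj hY k).1
    have hB : 0 ≤ k - 1 → a k ≤ a (k-1) ∧ a (k-1) ≤ a k + 1 := by
      intro h
      have := (dk_adj hY (k-1)).2 h
      rw [show k - 1 + 1 = k by ring] at this
      exact this
    have hC : 0 ≤ k → a (k+1) ≤ a k ∧ a k ≤ a (k+1) + 1 := (dk_adj hY k).2
    have hD : k + 1 ≤ 0 → a k ≤ a (k+1) ∧ a (k+1) ≤ a k + 1 := by
      intro h
      have := (dk_adj hY (k+1)).1 h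
      rw [show k + 1 - 1 = k by ring] at this
      exact this
    have := badj_aux hs0.1 hs0.2 hρs hA hB hC hD ht hm1 hm2
      (fun h => congrArg a h) (fun h => congrArg a h) (fun h => congrArg a h)
      (fun h => congrArg a h)
    rw [hbk (k-1), hbk k, hbk (k+1)]
    exact this
  obtain ⟨Z, hZYD, hZsub, hdkZ⟩ := realize b hb0 hbR hadjb
  have hZsym : ∀ k, dk Z k = dk Z (s - k) := by
    intro k
    rw [hdkZ k, hdkZ (s - k), hbk k, hbk (s - k)]
    have := hsym k
    split_ifs <;> omega
  have hSCrb : SCr (dk Z) ρ := by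
    unfold SCr
    rw [hdkZ ρ, hdkZ (ρ+1), hbk ρ, hbk (ρ+1)]
    left
    refine ⟨by omega, ?_⟩
    rw [if_pos ⟨by omega, le_rfl⟩, if_neg (by omega)]
    omega
  have hSClb : SCl (dk Z) (s - ρ) := by
    unfold SCl
    rw [hdkZ (s-ρ), hdkZ (s-ρ-1), hbk (s-ρ), hbk (s-ρ-1)]
    left
    refine ⟨by omega, ?_⟩
    rw [if_pos ⟨le_rfl, by omega⟩, if_neg (by omega)]
    omega
  obtain ⟨i, j, hijZ, hi1, hj1, hre, hce⟩ := box_of_SC hZYD (by omega : s - ρ ≤ ρ) hSCrb hSClb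
  have hY1 : IsYD (removeHook Z i j) := removeHook_IsYD hZYD hijZ
  have hcut : ∀ k, dk (removeHook Z i j) k = cut b (s - ρ) ρ k := by
    intro k
    rw [dk_removeHook hZYD hijZ k, dk_hook hZYD hijZ k, hdkZ k]
    unfold cut
    split_ifs <;> omega
  have hcuta : ∀ k, cut b (s - ρ) ρ k = a k := by
    intro k
    unfold cut
    rw [hbk k]
    split_ifs <;> omega
  have hYeq : removeHook Z i j = Y := by
    apply YD_ext hY1 hY
    intro k
    rw [hcut k, hcuta k, hak]
  have hno : ¬∃ i' j' : ℕ, (i', j') ∈ removeHook Z i j ∧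
      Amul m n (hook (removeHook Z i j) i' j') = Amul m n (hook Z i j) := by
    rintro ⟨i', j', hij', hAm⟩
    obtain ⟨hSCr', hSCl', hc1, hc2⟩ := SC_of_box hY1 hij'
    set l' : ℤ := (j':ℤ) - colLen (removeHook Z i j) j' with hl'def
    set r' : ℤ := (rowLen (removeHook Z i j) i' : ℤ) - i' with hr'def
    have hlr' : l' ≤ r' := le_trans hc1 hc2
    rw [Amul_hook hY1 hij', Amul_hook hZYD hijZ, hre, hce] at hAm
    have hcard : (Finset.Icc l' r').card = (Finset.Icc (s - ρ) ρ).card := by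
      have := congrArg Multiset.card hAm
      rwa [Multiset.card_map, Multiset.card_map] at this
    have hlen : s - ρ ≤ ρ ∧ (ρ - (s - ρ) = r' - l') := by
      rw [Int.card_Icc, Int.card_Icc] at hcard
      omega
    have hsum : Tsum m n (s - ρ) ρ = Tsum m n l' r' := (congrArg Multiset.sum hAm).symm
    have hrec := interval_recover m n hlen.1 hlr' hlen.2 hsum
    have hl'e : l' = s - ρ := by
      rcases hrec with ⟨h1, _⟩ | ⟨h1, _⟩ <;> omega
    have hscl2 : SCl (cut b (s - ρ) ρ) (s - ρ) := by
      have : SCl (dk (removeHook Z i j)) l' := hSCl'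
      rw [hl'e] at this
      unfold SCl at this ⊢
      rw [hcut (s - ρ), hcut (s - ρ - 1)] at this
      exact this
    have hsclb2 : SCl b (s - ρ) := by
      have := hSClb
      unfold SCl at this ⊢
      rw [hdkZ (s-ρ), hdkZ (s-ρ-1)] at this
      exact this
    exact cut_notsame (by omega) hsclb2 hscl2
  refine ⟨Z, hZYD, hZsub, hZsym, ?_⟩
  exact ⟨i, j, hijZ, Or.inl ⟨hYeq.symm, hno⟩⟩

end Dev9
section Dev10

lemma rect_sym {m n : ℕ} (k : ℤ) :
    dk (rect m n) k = dk (rect m n) ((n:ℤ) - m - k) := by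
  rw [dk_rect, dk_rect]
  omega

lemma main_iff {m n : ℕ} (hm : 1 ≤ m) (hs : (n:ℤ) - m = 0 ∨ (n:ℤ) - m = 1)
    (Y : Finset (ℕ × ℕ)) (hY : IsYD Y) (hsub : Y ⊆ rect m n) :
    (∀ k : ℤ, dk Y k = dk Y ((n:ℤ) - m - k)) ↔ Reach m n Y := by
  constructor
  · intro hsym
    have main : ∀ d : ℕ, ∀ W : Finset (ℕ × ℕ), IsYD W → W ⊆ rect m n →
        (∀ k, dk W k = dk W ((n:ℤ) - m - k)) → (rect m n).card - W.card ≤ d →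
        Reach m n W := by
      intro d
      induction d with
      | zero =>
        intro W hW hWsub hWsym hd
        have hcard := Finset.card_le_card hWsub
        have : W = rect m n := Finset.eq_of_subset_of_card_le hWsub (by omega)
        rw [this]
        exact Relation.ReflTransGen.refl
      | succ d ih =>
        intro W hW hWsub hWsym hd
        by_cases he : W = rect m n
        · rw [he]; exact Relation.ReflTransGen.refl
        · obtain ⟨Z, hZ1, hZ2, hZ3, hZmv⟩ := step_up hm hs hW hWsub hWsym he
          have hcard : W.card < Z.card := move_card_lt hZmv
          have hZcard := Finset.card_le_card hZ2
          have hZr : Reach m n Z := ih Z hZ1 hZ2 hZ3 (by omega)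
          exact hZr.tail hZmv
    exact main ((rect m n).card - Y.card) Y hY hsub hsym le_rfl
  · intro hR
    clear hY hsub
    have hinv : IsYD Y ∧ Y ⊆ rect m n ∧ ∀ k, dk Y k = dk Y ((n:ℤ) - m - k) := by
      induction hR with
      | refl => exact ⟨rect_IsYD m n, subset_rfl, fun k => rect_sym k⟩
      | tail _ hmv ih => exact move_preserves hs ih.1 ih.2.1 ih.2.2 hmv
    exact hinv.2.2

end Dev10

theorem stmt17' (n : ℕ) (hn : 1 ≤ n) :
    (∀ Y : Finset (ℕ × ℕ), IsYD Y → Y ⊆ rect n n →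
      ((∀ i : ℤ, -(n : ℤ) ≤ i → i ≤ (n : ℤ) → dk Y i = dk Y (-i)) ↔ Reach n n Y)) ∧
    (∀ Y : Finset (ℕ × ℕ), IsYD Y → Y ⊆ rect n (n + 1) →
      ((∀ i : ℤ, -(n : ℤ) ≤ i → i ≤ (n : ℤ) + 1 → dk Y i = dk Y (1 - i)) ↔
        Reach n (n + 1) Y)) := by
  constructor
  · intro Y hY hsub
    have hiff := main_iff (m := n) (n := n) hn (Or.inl (by ring)) Y hY hsub
    constructor
    · intro hbdd
      apply hiff.mp
      intro k
      rw [show (n:ℤ) - n - k = -k by ring]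
      rcases le_or_gt k (-(n:ℤ)) with h1 | h1
      · rcases eq_or_lt_of_le h1 with h | h
        · exact hbdd k (by omega) (by omega)
        · rw [dk_zero_right hsub (Or.inl (by omega)),
            dk_zero_right hsub (Or.inr (by omega))]
      · rcases le_or_gt k (n:ℤ) with h2 | h2
        · exact hbdd k (by omega) (by omega)
        · rw [dk_zero_right hsub (Or.inr (by omega)),
            dk_zero_right hsub (Or.inl (by omega))]
    · intro hR i _ _
      have := hiff.mpr hR i
      rwa [show (n:ℤ) - n - i = -i by ring] at this
  · intro Y hY hsub
    have hs1 : ((n + 1 : ℕ) : ℤ) - n = 0 ∨ ((n + 1 : ℕ) : ℤ) - n = 1 := by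
      right; push_cast; ring
    have hiff := main_iff (m := n) (n := n + 1) hn hs1 Y hY hsub
    constructor
    · intro hbdd
      apply hiff.mp
      intro k
      rw [show ((n + 1 : ℕ) : ℤ) - n - k = 1 - k by push_cast; ring]
      rcases le_or_gt k (-(n:ℤ)) with h1 | h1
      · rcases eq_or_lt_of_le h1 with h | h
        · exact hbdd k (by omega) (by omega)
        · rw [dk_zero_right hsub (Or.inl (by omega)),
            dk_zero_right hsub (Or.inr (by push_cast; omega))]
      · rcases le_or_gt k ((n:ℤ) + 1) with h2 | h2
        · exact hbdd k (by omega) (by omega)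
        · rw [dk_zero_right hsub (Or.inr (by push_cast; omega)),
            dk_zero_right hsub (Or.inl (by omega))]
    · intro hR i _ _
      have := hiff.mpr hR i
      rwa [show ((n + 1 : ℕ) : ℤ) - n - i = 1 - i by push_cast; ring] at this
theorem stmt17 (n : ℕ) (hn : 1 ≤ n) :
    (∀ Y : Finset (ℕ × ℕ), IsYD Y → Y ⊆ rect n n →
      ((∀ i : ℤ, -(n : ℤ) ≤ i → i ≤ (n : ℤ) → dk Y i = dk Y (-i)) ↔ Reach n n Y)) ∧
    (∀ Y : Finset (ℕ × ℕ), IsYD Y → Y ⊆ rect n (n + 1) →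
      ((∀ i : ℤ, -(n : ℤ) ≤ i → i ≤ (n : ℤ) + 1 → dk Y i = dk Y (1 - i)) ↔
        Reach n (n + 1) Y)) := by
  exact stmt17' n hn
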